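/- arXiv:2210.02738 — 6 statements merged into one kernel-verified Lean document; each statement's English description precedes it below -/
import Mathlib

section
/- For every feasible point x of the problem min ‖Ax−b‖₂ subject to x ∈ [0,1]^n, ‖x‖₀ ≤ σ, there exists x′ ∈ [0,1]^n with Ax = Ax′, ‖x′‖₀ ≤ σ, and x′ has at most m fractional (non-integer) entries. -/
open scoped BigOperators Classical

noncomputable def l0 {n : ℕ} (v : Fin n → ℝ) : ℕ :=
  (Finset.univ.filter (fun i => v i ≠ 0)).card

private lemma step_lemma {m n : ℕ} (A : Matrix (Fin m) (Fin n) ℤ) (x : Fin n → ℝ)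
    (hx01 : ∀ i, 0 ≤ x i ∧ x i ≤ 1)
    (h : m < (Finset.univ.filter (fun i => ¬ ∃ z : ℤ, x i = z)).card) :
    ∃ y : Fin n → ℝ, (∀ i, 0 ≤ y i ∧ y i ≤ 1) ∧ (∀ i, x i = 0 → y i = 0) ∧
      (∀ r : Fin m, ∑ j, (A r j : ℝ) * y j = ∑ j, (A r j : ℝ) * x j) ∧
      (Finset.univ.filter (fun i => ¬ ∃ z : ℤ, y i = z)).card <
        (Finset.univ.filter (fun i => ¬ ∃ z : ℤ, x i = z)).card := by
  set F : Finset (Fin n) := Finset.univ.filter (fun i => ¬ ∃ z : ℤ, x i = z) with hF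
  -- entries indexed by F are strictly between 0 and 1
  have hfrac : ∀ i ∈ F, 0 < x i ∧ x i < 1 := by
    intro i hi
    rw [hF, Finset.mem_filter] at hi
    constructor
    · rcases lt_or_eq_of_le (hx01 i).1 with h' | h'
      · exact h'
      · exact absurd ⟨0, by simp [← h']⟩ hi.2
    · rcases lt_or_eq_of_le (hx01 i).2 with h' | h'
      · exact h'
      · exact absurd ⟨1, by simp [h']⟩ hi.2
  -- the columns of A indexed by F are linearly dependent
  have hdep : ¬ LinearIndependent ℝ (fun j : F => fun r : Fin m => (A r j : ℝ)) := by
    intro hli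
    have hc := hli.fintype_card_le_finrank
    rw [Module.finrank_fin_fun, Fintype.card_coe] at hc
    omega
  obtain ⟨g, hg0, j₀, hgj₀⟩ := Fintype.not_linearIndependent_iff.mp hdep
  -- the kernel direction d, supported on F
  set d : Fin n → ℝ := fun j => if hj : j ∈ F then g ⟨j, hj⟩ else 0 with hd
  have hdF : ∀ j, j ∉ F → d j = 0 := fun j hj => dif_neg hj
  have hAd : ∀ r : Fin m, ∑ j, (A r j : ℝ) * d j = 0 := by
    intro r
    have h1 : ∑ j, (A r j : ℝ) * d j = ∑ j ∈ F, (A r j : ℝ) * d j := by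
      refine (Finset.sum_subset F.subset_univ ?_).symm
      intro j _ hj
      rw [hdF j hj, mul_zero]
    have h2 : ∑ j ∈ F, (A r j : ℝ) * d j = ∑ j : F, g j * (A r j : ℝ) := by
      rw [← Finset.sum_coe_sort F]
      refine Finset.sum_congr rfl fun j _ => ?_
      rw [hd]
      simp only [dif_pos j.2]
      ring
    have h3 := congrFun hg0 r
    rw [Finset.sum_apply] at h3
    simp only [Pi.smul_apply, smul_eq_mul, Pi.zero_apply] at h3
    rw [h1, h2, h3]
  -- the set of moving coordinates
  set S : Finset (Fin n) := Finset.univ.filter (fun i => d i ≠ 0) with hS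
  have hSF : ∀ i ∈ S, i ∈ F := by
    intro i hi
    rw [hS, Finset.mem_filter] at hi
    by_contra hiF
    exact hi.2 (hdF i hiF)
  have hSne : S.Nonempty := by
    refine ⟨j₀.1, ?_⟩
    rw [hS, Finset.mem_filter]
    refine ⟨Finset.mem_univ _, ?_⟩
    rw [hd]
    simpa [dif_pos j₀.2] using hgj₀
  -- the step sizes
  set c : Fin n → ℝ := fun i => if 0 < d i then (1 - x i) / d i else x i / (-d i) with hc
  have hcpos : ∀ i ∈ S, 0 < c i := by
    intro i hi
    have hdne : d i ≠ 0 := by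
      rw [hS, Finset.mem_filter] at hi; exact hi.2
    obtain ⟨hx0, hx1⟩ := hfrac i (hSF i hi)
    simp only [hc]
    by_cases hdi : 0 < d i
    · rw [if_pos hdi]; exact div_pos (by linarith) hdi
    · rw [if_neg hdi]
      have : d i < 0 := lt_of_le_of_ne (not_lt.mp hdi) hdne
      exact div_pos hx0 (by linarith)
  obtain ⟨i₀, hi₀S, hmin⟩ := S.exists_min_image c hSne
  set t : ℝ := c i₀ with ht
  have htpos : 0 < t := hcpos i₀ hi₀S
  set y : Fin n → ℝ := fun i => x i + t * d i with hy
  have hyx : ∀ i, d i = 0 → y i = x i := by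
    intro i hdi; rw [hy]; simp [hdi]
  have hdne : ∀ i ∈ S, d i ≠ 0 := by
    intro i hi; rw [hS, Finset.mem_filter] at hi; exact hi.2
  -- bounds
  have hy01 : ∀ i, 0 ≤ y i ∧ y i ≤ 1 := by
    intro i
    by_cases hdi : d i = 0
    · rw [hyx i hdi]; exact hx01 i
    · have hiS : i ∈ S := by rw [hS, Finset.mem_filter]; exact ⟨Finset.mem_univ _, hdi⟩
      have hti := hmin i hiS
      obtain ⟨hx0, hx1⟩ := hfrac i (hSF i hiS)
      simp only [hy]
      by_cases hpos : 0 < d i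
      · have hcival : c i = (1 - x i) / d i := by simp only [hc]; rw [if_pos hpos]
        rw [hcival] at hti
        have h1 : t * d i ≤ 1 - x i := by
          rw [← le_div_iff₀ hpos]; exact hti
        have h2 : 0 ≤ t * d i := le_of_lt (mul_pos htpos hpos)
        constructor <;> linarith
      · have hneg : d i < 0 := lt_of_le_of_ne (not_lt.mp hpos) hdi
        have hcival : c i = x i / (-d i) := by simp only [hc]; rw [if_neg hpos]
        rw [hcival] at hti
        have h1 : t * (-d i) ≤ x i := by
          rw [← le_div_iff₀ (by linarith : (0:ℝ) < -d i)]; exact hti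
        have h2 : t * d i ≤ 0 := le_of_lt (mul_neg_of_pos_of_neg htpos hneg)
        constructor <;> linarith
  -- support preserved
  have hsupp : ∀ i, x i = 0 → y i = 0 := by
    intro i hxi
    have hiF : i ∉ F := by
      rw [hF, Finset.mem_filter]
      push_neg
      intro _
      exact ⟨0, by simp [hxi]⟩
    rw [hyx i (hdF i hiF)]; exact hxi
  -- image preserved
  have hAy : ∀ r : Fin m, ∑ j, (A r j : ℝ) * y j = ∑ j, (A r j : ℝ) * x j := by
    intro r
    have : ∑ j, (A r j : ℝ) * y j
        = ∑ j, (A r j : ℝ) * x j + t * ∑ j, (A r j : ℝ) * d j := by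
      rw [Finset.mul_sum, ← Finset.sum_add_distrib]
      refine Finset.sum_congr rfl fun j _ => ?_
      rw [hy]; ring
    rw [this, hAd r, mul_zero, add_zero]
  -- i₀ becomes integral
  have hi₀int : ∃ z : ℤ, y i₀ = z := by
    have hd₀ : d i₀ ≠ 0 := hdne i₀ hi₀S
    simp only [hy, ht, hc]
    by_cases hpos : 0 < d i₀
    · refine ⟨1, ?_⟩
      rw [if_pos hpos, div_mul_cancel₀ _ hd₀]
      push_cast; ring
    · refine ⟨0, ?_⟩
      rw [if_neg hpos]
      have : -d i₀ ≠ 0 := by simpa using hd₀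
      field_simp
      push_cast; ring
  -- fractional set shrinks
  have hFy : (Finset.univ.filter (fun i => ¬ ∃ z : ℤ, y i = z)) ⊂ F := by
    constructor
    · intro i hi
      rw [Finset.mem_filter] at hi
      rw [hF, Finset.mem_filter]
      refine ⟨Finset.mem_univ _, ?_⟩
      intro hxi
      by_cases hiF : i ∈ F
      · rw [hF, Finset.mem_filter] at hiF; exact hiF.2 hxi
      · exact hi.2 (by rw [hyx i (hdF i hiF)]; exact hxi)
    · intro hsub
      have hi₀F : i₀ ∈ F := hSF i₀ hi₀S
      have := hsub hi₀F
      rw [Finset.mem_filter] at this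
      exact this.2 hi₀int
  exact ⟨y, hy01, hsupp, hAy, Finset.card_lt_card hFy⟩

/-- every feasible point of the ℓ₀-problem has an equivalent
feasible point (same image under A) with at most m fractional entries. -/
theorem few_fractional_l0 (m n : ℕ) (A : Matrix (Fin m) (Fin n) ℤ)
    (σ : ℕ) (hσ : 1 ≤ σ) (x : Fin n → ℝ)
    (hx01 : ∀ i, 0 ≤ x i ∧ x i ≤ 1) (hx0 : l0 x ≤ σ) :
    ∃ x' : Fin n → ℝ, (∀ i, 0 ≤ x' i ∧ x' i ≤ 1) ∧ l0 x' ≤ σ ∧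
      (∀ r : Fin m, ∑ j, (A r j : ℝ) * x' j = ∑ j, (A r j : ℝ) * x j) ∧
      (Finset.univ.filter (fun i => ¬ ∃ z : ℤ, x' i = z)).card ≤ m := by
  suffices h : ∀ k : ℕ, ∀ x : Fin n → ℝ, (∀ i, 0 ≤ x i ∧ x i ≤ 1) → l0 x ≤ σ →
      (Finset.univ.filter (fun i => ¬ ∃ z : ℤ, x i = z)).card ≤ k →
      ∃ x' : Fin n → ℝ, (∀ i, 0 ≤ x' i ∧ x' i ≤ 1) ∧ l0 x' ≤ σ ∧
        (∀ r : Fin m, ∑ j, (A r j : ℝ) * x' j = ∑ j, (A r j : ℝ) * x j) ∧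
        (Finset.univ.filter (fun i => ¬ ∃ z : ℤ, x' i = z)).card ≤ m by
    exact h _ x hx01 hx0 le_rfl
  intro k
  induction k with
  | zero =>
    intro x h1 h2 h3
    exact ⟨x, h1, h2, fun r => rfl, le_trans h3 (Nat.zero_le m)⟩
  | succ k ih =>
    intro x h1 h2 h3
    by_cases hm : (Finset.univ.filter (fun i => ¬ ∃ z : ℤ, x i = z)).card ≤ m
    · exact ⟨x, h1, h2, fun r => rfl, hm⟩
    · obtain ⟨y, hy01, hy0, hyA, hycard⟩ := step_lemma A x h1 (not_le.mp hm)
      have hl0y : l0 y ≤ σ := by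
        refine le_trans (Finset.card_le_card ?_) h2
        intro i hi
        rw [Finset.mem_filter] at hi ⊢
        refine ⟨Finset.mem_univ _, ?_⟩
        intro hxi
        exact hi.2 (hy0 i hxi)
      obtain ⟨x', hx'01, hx'l0, hx'A, hx'frac⟩ := ih y hy01 hl0y (by omega)
      exact ⟨x', hx'01, hx'l0, fun r => (hx'A r).trans (hyA r), hx'frac⟩
end

section
/- Let Q = {Ax : x ∈ [0,1]^n, ‖x‖₁ ≤ σ} and σ ≥ m an integer. If b ∈ ((σ−m+1)/σ)·Q, then there exists x⋆ ∈ [0,1]^n with ‖x⋆‖₀ ≤ σ and Ax⋆ = b. -/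
open scoped BigOperators Classical Pointwise

/-- More than `m` columns of an `m × n` matrix are linearly dependent. -/
lemma exists_dep {m n : ℕ} (A : Matrix (Fin m) (Fin n) ℝ) (F : Finset (Fin n))
    (hF : m < F.card) :
    ∃ z : Fin n → ℝ, z ≠ 0 ∧ (∀ j, j ∉ F → z j = 0) ∧ A.mulVec z = 0 := by
  have hni : ¬ LinearIndependent ℝ (fun j : F => (fun i => A i j : Fin m → ℝ)) := by
    intro hli
    have := hli.fintype_card_le_finrank
    simp [Module.finrank_fintype_fun_eq_card] at this
    omega
  rw [Fintype.not_linearIndependent_iff] at hni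
  obtain ⟨g, hg, j0, hj0⟩ := hni
  refine ⟨fun j => if h : j ∈ F then g ⟨j, h⟩ else 0, ?_, ?_, ?_⟩
  · intro hzero
    apply hj0
    have := congrFun hzero j0
    simpa [j0.2] using this
  · intro j hj; simp [hj]
  · funext k
    have := congrFun hg k
    simp only [Finset.sum_apply, Pi.smul_apply, smul_eq_mul, Pi.zero_apply] at this
    show (∑ j, A k j * _) = 0
    rw [← Finset.sum_subset F.subset_univ (by intro j _ hj; simp [hj])]
    rw [← Finset.sum_attach F (fun j => A k j * (if h : j ∈ F then g ⟨j, h⟩ else 0))]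
    rw [← this]
    apply Finset.sum_congr rfl
    intro j _
    simp [j.2, mul_comm]

lemma reduce {m n : ℕ} (A : Matrix (Fin m) (Fin n) ℝ) (s : ℝ) :
    ∀ N (x : Fin n → ℝ), (Finset.univ.filter (fun i => x i ≠ 0 ∧ x i ≠ 1)).card = N →
    (∀ i, 0 ≤ x i ∧ x i ≤ 1) → (∑ i, x i) ≤ s →
    ∃ x' : Fin n → ℝ, (∀ i, 0 ≤ x' i ∧ x' i ≤ 1) ∧ (∑ i, x' i) ≤ s ∧
      A.mulVec x' = A.mulVec x ∧
      (Finset.univ.filter (fun i => x' i ≠ 0 ∧ x' i ≠ 1)).card ≤ m := by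
  intro N
  induction N using Nat.strong_induction_on with
  | _ N ih =>
  intro x hcard hbnd hsum
  set F := Finset.univ.filter (fun i => x i ≠ 0 ∧ x i ≠ 1) with hFdef
  by_cases hle : F.card ≤ m
  · exact ⟨x, hbnd, hsum, rfl, hle⟩
  push_neg at hle
  obtain ⟨z, hz0, hzsupp, hAz⟩ := exists_dep A F hle
  -- replace z by w with ∑ w ≤ 0
  obtain ⟨w, hw0, hwsupp, hAw, hwsum⟩ :
      ∃ w : Fin n → ℝ, w ≠ 0 ∧ (∀ j, j ∉ F → w j = 0) ∧ A.mulVec w = 0 ∧ (∑ i, w i) ≤ 0 := by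
    by_cases h : (∑ i, z i) ≤ 0
    · exact ⟨z, hz0, hzsupp, hAz, h⟩
    · refine ⟨-z, neg_ne_zero.mpr hz0, fun j hj => by simp [hzsupp j hj], by
        rw [Matrix.mulVec_neg, hAz]; simp, ?_⟩
      simp only [Pi.neg_apply, Finset.sum_neg_distrib]
      linarith
  -- the step sizes
  set tf : Fin n → ℝ := fun j => if 0 < w j then (1 - x j) / w j else x j / (-w j) with htf
  have hSne : (Finset.univ.filter (fun j => w j ≠ 0)).Nonempty := by
    obtain ⟨i, hi⟩ := Function.ne_iff.mp hw0
    exact ⟨i, by simpa using hi⟩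
  obtain ⟨i0, hi0S, hmin⟩ := Finset.exists_min_image _ tf hSne
  have hi0w : w i0 ≠ 0 := by simpa using hi0S
  set t := tf i0 with ht
  have htf_nonneg : ∀ j, w j ≠ 0 → 0 ≤ tf j := by
    intro j hj
    rcases lt_or_gt_of_ne hj with h | h
    · simp only [htf, if_neg (not_lt.mpr h.le)]
      exact div_nonneg (hbnd j).1 (by linarith)
    · simp only [htf, if_pos h]
      exact div_nonneg (by linarith [(hbnd j).2]) h.le
  have ht0 : 0 ≤ t := htf_nonneg i0 hi0w
  have htle : ∀ j, w j ≠ 0 → t ≤ tf j := fun j hj => hmin j (by simpa using hj)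
  set x' : Fin n → ℝ := fun j => x j + t * w j with hx'
  have hbnd' : ∀ j, 0 ≤ x' j ∧ x' j ≤ 1 := by
    intro j
    by_cases hj : w j = 0
    · simp [hx', hj]; exact hbnd j
    rcases lt_or_gt_of_ne hj with h | h
    · -- w j < 0
      have h1 : t ≤ x j / (-w j) := by
        have := htle j hj; simpa [htf, not_lt.mpr h.le] using this
      have h2 : t * (-w j) ≤ x j := by
        rwa [le_div_iff₀ (by linarith)] at h1
      constructor
      · simp only [hx']; nlinarith
      · have : t * w j ≤ 0 := mul_nonpos_of_nonneg_of_nonpos ht0 h.le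
        simp only [hx']; linarith [(hbnd j).2]
    · -- w j > 0
      have h1 : t ≤ (1 - x j) / w j := by
        have := htle j hj; simpa [htf, h] using this
      have h2 : t * w j ≤ 1 - x j := by rwa [le_div_iff₀ h] at h1
      constructor
      · have : 0 ≤ t * w j := mul_nonneg ht0 h.le
        simp only [hx']; linarith [(hbnd j).1]
      · simp only [hx']; linarith
  have hsum' : (∑ i, x' i) ≤ s := by
    have : (∑ i, x' i) = (∑ i, x i) + t * ∑ i, w i := by
      simp [hx', Finset.sum_add_distrib, Finset.mul_sum]
    rw [this]
    nlinarith
  have hmul' : A.mulVec x' = A.mulVec x := by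
    have : x' = x + t • w := by funext j; simp [hx', mul_comm]
    rw [this, Matrix.mulVec_add, Matrix.mulVec_smul, hAw]
    simp
  -- the boundary coordinate
  have hx'i0 : x' i0 = 0 ∨ x' i0 = 1 := by
    rcases lt_or_gt_of_ne hi0w with h | h
    · left
      have : t = x i0 / (-w i0) := by simp [ht, htf, not_lt.mpr h.le]
      simp only [hx', this]
      rw [div_neg, neg_mul, div_mul_cancel₀ _ hi0w]
      ring
    · right
      have : t = (1 - x i0) / w i0 := by simp [ht, htf, h]
      simp only [hx', this]
      field_simp
      ring
  have hFsub : (Finset.univ.filter (fun i => x' i ≠ 0 ∧ x' i ≠ 1)) ⊆ F.erase i0 := by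
    intro j hj
    simp only [Finset.mem_filter, Finset.mem_univ, true_and] at hj
    rw [Finset.mem_erase]
    constructor
    · rintro rfl
      rcases hx'i0 with h | h
      · exact hj.1 h
      · exact hj.2 h
    · by_contra hjF
      have hwj : w j = 0 := hwsupp j hjF
      have hxj : x' j = x j := by simp [hx', hwj]
      have : ¬ (x j ≠ 0 ∧ x j ≠ 1) := by
        intro hc
        exact hjF (by simp [hFdef, hc.1, hc.2])
      push_neg at this
      by_cases h0 : x j = 0
      · exact hj.1 (by rw [hxj, h0])
      · exact hj.2 (by rw [hxj, this h0])
  have hi0F : i0 ∈ F := by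
    by_contra h
    exact hi0w (hwsupp i0 h)
  have hcard' : (Finset.univ.filter (fun i => x' i ≠ 0 ∧ x' i ≠ 1)).card < N := by
    calc (Finset.univ.filter (fun i => x' i ≠ 0 ∧ x' i ≠ 1)).card
        ≤ (F.erase i0).card := Finset.card_le_card hFsub
      _ = F.card - 1 := Finset.card_erase_of_mem hi0F
      _ < N := by omega
  obtain ⟨x'', h1, h2, h3, h4⟩ := ih _ hcard' x' rfl hbnd' hsum'
  exact ⟨x'', h1, h2, h3.trans hmul', h4⟩

/-- if `b ∈ ((σ−m+1)/σ)·Q` where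
`Q = {Ax : x ∈ [0,1]^n, ‖x‖₁ ≤ σ}` and `σ ≥ m ≥ 1`, then `b = Ax⋆` for some
`x⋆ ∈ [0,1]^n` with `‖x⋆‖₀ ≤ σ`. -/
theorem exact_representation_deep_inside (m n : ℕ) (hm : 1 ≤ m)
    (A : Matrix (Fin m) (Fin n) ℝ) (σ : ℕ) (hσ : m ≤ σ) (b : Fin m → ℝ)
    (hb : b ∈ ((σ - m + 1 : ℝ) / σ) •
      {y : Fin m → ℝ | ∃ x : Fin n → ℝ,
        (∀ i, 0 ≤ x i ∧ x i ≤ 1) ∧ (∑ i, x i) ≤ σ ∧ y = A.mulVec x}) :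
    ∃ x : Fin n → ℝ, (∀ i, 0 ≤ x i ∧ x i ≤ 1) ∧ l0 x ≤ σ ∧ A.mulVec x = b := by
  obtain ⟨y, hy, rfl⟩ := hb
  obtain ⟨x0, hx0, hx0sum, rfl⟩ := hy
  set c : ℝ := ((σ : ℝ) - m + 1) / σ with hc
  have hσR : (0 : ℝ) < σ := by
    have : (1 : ℝ) ≤ (σ : ℝ) := by exact_mod_cast hm.trans hσ
    linarith
  have hmσ : (m : ℝ) ≤ (σ : ℝ) := by exact_mod_cast hσ
  have hmR : (1 : ℝ) ≤ (m : ℝ) := by exact_mod_cast hm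
  have hc0 : 0 ≤ c := div_nonneg (by linarith) hσR.le
  have hc1 : c ≤ 1 := by rw [hc, div_le_one hσR]; linarith
  set x1 : Fin n → ℝ := fun i => c * x0 i with hx1
  have hbnd1 : ∀ i, 0 ≤ x1 i ∧ x1 i ≤ 1 := by
    intro i
    exact ⟨mul_nonneg hc0 (hx0 i).1, mul_le_one₀ hc1 (hx0 i).1 (hx0 i).2⟩
  have hsum1 : (∑ i, x1 i) ≤ (σ : ℝ) - m + 1 := by
    have h1 : (∑ i, x1 i) = c * ∑ i, x0 i := by
      simp [hx1, Finset.mul_sum]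
    have h2 : c * ∑ i, x0 i ≤ c * σ := mul_le_mul_of_nonneg_left hx0sum hc0
    have h3 : c * σ = (σ : ℝ) - m + 1 := by
      rw [hc]; field_simp
    linarith
  have hmul1 : A.mulVec x1 = c • A.mulVec x0 := by
    have : x1 = c • x0 := rfl
    rw [this, Matrix.mulVec_smul]
  obtain ⟨x', hbnd', hsum', hmul', hfrac'⟩ :=
    reduce A ((σ : ℝ) - m + 1) _ x1 rfl hbnd1 hsum1
  refine ⟨x', hbnd', ?_, by rw [hmul', hmul1]⟩
  -- counting
  set O := Finset.univ.filter (fun i => x' i = 1) with hO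
  set Fr := Finset.univ.filter (fun i => x' i ≠ 0 ∧ x' i ≠ 1) with hFr
  have hsub : Finset.univ.filter (fun i => x' i ≠ 0) ⊆ O ∪ Fr := by
    intro i hi
    simp only [Finset.mem_filter, Finset.mem_univ, true_and] at hi
    by_cases h1 : x' i = 1
    · exact Finset.mem_union_left _ (by simp [hO, h1])
    · exact Finset.mem_union_right _ (by simp [hFr, hi, h1])
  have hl0 : l0 x' ≤ O.card + Fr.card :=
    (Finset.card_le_card hsub).trans (Finset.card_union_le _ _)
  have hOsum : (O.card : ℝ) = ∑ i ∈ O, x' i := by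
    rw [Finset.sum_congr rfl (fun i hi => by
      simp only [hO, Finset.mem_filter] at hi; exact hi.2)]
    simp
  have hOle : ∀ T : Finset (Fin n), (∑ i ∈ T, x' i) ≤ ∑ i, x' i := by
    intro T
    apply Finset.sum_le_sum_of_subset_of_nonneg T.subset_univ
    intro i _ _; exact (hbnd' i).1
  have hcast : ((σ - m + 1 : ℕ) : ℝ) = (σ : ℝ) - m + 1 := by
    push_cast [Nat.cast_sub hσ]; ring
  rcases Finset.eq_empty_or_nonempty Fr with hFe | ⟨i1, hi1⟩
  · have : (O.card : ℝ) ≤ ((σ - m + 1 : ℕ) : ℝ) := by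
      rw [hcast, hOsum]; exact (hOle O).trans hsum'
    have hOn : O.card ≤ σ - m + 1 := by exact_mod_cast this
    have : l0 x' ≤ O.card := by simpa [hFe] using hl0
    omega
  · have hi1' : x' i1 ≠ 0 ∧ x' i1 ≠ 1 := by
      simpa [hFr] using hi1
    have hi1pos : 0 < x' i1 := lt_of_le_of_ne (hbnd' i1).1 (Ne.symm hi1'.1)
    have hi1O : i1 ∉ O := by simp [hO, hi1'.2]
    have hsplit : (∑ i ∈ insert i1 O, x' i) = x' i1 + ∑ i ∈ O, x' i :=
      Finset.sum_insert hi1O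
    have : (O.card : ℝ) < (σ : ℝ) - m + 1 := by
      have h1 := hOle (insert i1 O)
      rw [hsplit, ← hOsum] at h1
      linarith
    have hOn : O.card < σ - m + 1 := by
      have := this.trans_eq hcast.symm
      exact_mod_cast this
    omega
end

section
/- Let x̂ minimize ‖Ax−b‖₂ over K = {x ∈ [0,1]^n : ‖x‖₁ ≤ σ} and let F = {i : x̂_i ∉ ℤ}. For any λ ∈ ℝ^F with Σ_{i∈F} λ_i = 0, the point Ax̂ + Σ_{i∈F} λ_i A_i lies in the hyperplane H = {y ∈ ℝ^m : (b−Ax̂)ᵀ y = (b−Ax̂)ᵀ Ax̂}, i.e., (b−Ax̂)ᵀ (Σ_{i∈F} λ_i A_i) = 0. -/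
open scoped BigOperators

noncomputable def l2 {m : ℕ} (v : Fin m → ℝ) : ℝ := Real.sqrt (∑ i, (v i) ^ 2)

def l1 {n : ℕ} (v : Fin n → ℝ) : ℝ := ∑ i, |v i|

/-- for an optimal solution `x̂` of the ℓ₁-relaxation and any
combination `Σ_{i∈F} λ_i A_i` of columns with fractional indices and
`Σ λ_i = 0`, we have `(b−Ax̂)ᵀ(Σ λ_i A_i) = 0`, i.e. `Ax̂ + Σ λ_i A_i ∈ H`. -/
theorem fractional_directions_in_hyperplane (m n : ℕ)
    (A : Matrix (Fin m) (Fin n) ℝ) (b : Fin m → ℝ) (σ : ℕ) (hσ : 1 ≤ σ)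
    (xhat : Fin n → ℝ)
    (hfeas : (∀ i, 0 ≤ xhat i ∧ xhat i ≤ 1) ∧ l1 xhat ≤ σ)
    (hopt : ∀ x : Fin n → ℝ, (∀ i, 0 ≤ x i ∧ x i ≤ 1) → l1 x ≤ σ →
      l2 (A.mulVec xhat - b) ≤ l2 (A.mulVec x - b))
    (lam : Fin n → ℝ)
    (hsupp : ∀ i, lam i ≠ 0 → 0 < xhat i ∧ xhat i < 1)
    (hsum : (∑ i, lam i) = 0) :
    (∑ r, (b r - A.mulVec xhat r) * (∑ i, lam i * A r i)) = 0 := by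
  classical
  rcases Nat.eq_zero_or_pos n with hn | hn
  · subst hn; simp
  haveI : Nonempty (Fin n) := ⟨⟨0, hn⟩⟩
  set w : Fin m → ℝ := fun r => A.mulVec xhat r - b r with hw
  set z : Fin m → ℝ := fun r => A.mulVec lam r with hz
  set c : ℝ := ∑ r, w r * z r with hc
  set q : ℝ := ∑ r, (z r) ^ 2 with hq
  have hq0 : 0 ≤ q := Finset.sum_nonneg fun r _ => sq_nonneg _
  -- feasibility radius
  set δ : Fin n → ℝ := fun i =>
    if lam i = 0 then 1 else min (xhat i) (1 - xhat i) / |lam i| with hδ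
  set ε₀ : ℝ := Finset.univ.inf' Finset.univ_nonempty δ with hε₀
  have hδpos : ∀ i, 0 < δ i := by
    intro i
    by_cases h : lam i = 0
    · simp [hδ, h]
    · have h1 := hsupp i h
      have : 0 < min (xhat i) (1 - xhat i) := lt_min h1.1 (by linarith [h1.2])
      simp only [hδ, h, if_false]
      exact div_pos this (abs_pos.mpr h)
  have hε₀pos : 0 < ε₀ := by
    rw [hε₀, Finset.lt_inf'_iff]
    exact fun i _ => hδpos i
  -- key inequality for feasible perturbations
  have key : ∀ ε : ℝ, |ε| ≤ ε₀ → 0 ≤ 2 * ε * c + ε ^ 2 * q := by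
    intro ε hε
    set x : Fin n → ℝ := fun i => xhat i + ε * lam i with hx
    have hxb : ∀ i, 0 ≤ x i ∧ x i ≤ 1 := by
      intro i
      by_cases h : lam i = 0
      · simpa [hx, h] using hfeas.1 i
      · have h1 := hsupp i h
        have hεδ : ε₀ ≤ δ i := Finset.inf'_le _ (Finset.mem_univ i)
        have habs : |ε * lam i| ≤ min (xhat i) (1 - xhat i) := by
          rw [abs_mul]
          have : |ε| * |lam i| ≤ δ i * |lam i| :=
            mul_le_mul_of_nonneg_right (le_trans hε hεδ) (abs_nonneg _)
          calc |ε| * |lam i| ≤ δ i * |lam i| := this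
            _ = min (xhat i) (1 - xhat i) := by
                simp only [hδ, h, if_false]
                field_simp
        have h2 := abs_le.mp habs
        constructor
        · have := h2.1
          have hm : min (xhat i) (1 - xhat i) ≤ xhat i := min_le_left _ _
          simp only [hx]; linarith
        · have := h2.2
          have hm : min (xhat i) (1 - xhat i) ≤ 1 - xhat i := min_le_right _ _
          simp only [hx]; linarith
    have hxl1 : l1 x ≤ σ := by
      have h1 : l1 x = ∑ i, x i := by
        unfold l1
        exact Finset.sum_congr rfl fun i _ => abs_of_nonneg (hxb i).1
      have h2 : l1 xhat = ∑ i, xhat i := by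
        unfold l1
        exact Finset.sum_congr rfl fun i _ => abs_of_nonneg (hfeas.1 i).1
      have h3 : (∑ i, x i) = ∑ i, xhat i := by
        simp only [hx, Finset.sum_add_distrib, ← Finset.mul_sum, hsum, mul_zero, add_zero]
      calc l1 x = l1 xhat := by rw [h1, h3, ← h2]
        _ ≤ σ := hfeas.2
    have hle := hopt x hxb hxl1
    have hsq : (∑ r, (A.mulVec xhat - b) r ^ 2) ≤ ∑ r, (A.mulVec x - b) r ^ 2 := by
      have h0 : (0:ℝ) ≤ ∑ r, (A.mulVec x - b) r ^ 2 :=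
        Finset.sum_nonneg fun r _ => sq_nonneg _
      simp only [l2] at hle
      exact (Real.sqrt_le_sqrt_iff h0).mp hle
    have hmv : ∀ r, A.mulVec x r = A.mulVec xhat r + ε * A.mulVec lam r := by
      intro r
      simp only [hx, Matrix.mulVec, dotProduct, mul_add, Finset.sum_add_distrib,
        Finset.mul_sum]
      congr 1
      refine Finset.sum_congr rfl fun i _ => ?_
      ring
    have hexp : (∑ r, (A.mulVec x - b) r ^ 2)
        = (∑ r, (A.mulVec xhat - b) r ^ 2) + (2 * ε * c + ε ^ 2 * q) := by
      have : ∀ r, (A.mulVec x - b) r ^ 2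
          = (A.mulVec xhat - b) r ^ 2 + (2 * ε * (w r * z r) + ε ^ 2 * z r ^ 2) := by
        intro r
        simp only [Pi.sub_apply, hmv r, hw, hz]
        ring
      rw [Finset.sum_congr rfl fun r _ => this r, Finset.sum_add_distrib,
        Finset.sum_add_distrib, hc, hq, ← Finset.mul_sum, ← Finset.mul_sum]
    linarith [hsq, hexp.symm.le, hexp.le]
  -- conclude c = 0
  have hc0 : c = 0 := by
    by_contra h
    have hcsq : 0 < c ^ 2 := by positivity
    set s : ℝ := min (ε₀ / (|c| + 1)) (1 / (q + 1)) with hs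
    have hspos : 0 < s := by
      apply lt_min
      · exact div_pos hε₀pos (by positivity)
      · positivity
    have hsq1 : s * q < 2 := by
      have h1 : s ≤ 1 / (q + 1) := min_le_right _ _
      have h2 : s * q ≤ (1 / (q + 1)) * q := mul_le_mul_of_nonneg_right h1 hq0
      have h3 : (1 / (q + 1)) * q < 1 := by
        rw [div_mul_eq_mul_div, one_mul, div_lt_one (by positivity)]
        linarith
      linarith
    have hεbnd : |(-c) * s| ≤ ε₀ := by
      rw [abs_mul, abs_neg, abs_of_pos hspos]
      have h1 : s ≤ ε₀ / (|c| + 1) := min_le_left _ _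
      have h2 : |c| * s ≤ |c| * (ε₀ / (|c| + 1)) :=
        mul_le_mul_of_nonneg_left h1 (abs_nonneg _)
      have h3 : |c| * (ε₀ / (|c| + 1)) ≤ ε₀ := by
        rw [mul_div_assoc']
        rw [div_le_iff₀ (by positivity)]
        nlinarith [abs_nonneg c, hε₀pos.le]
      linarith
    have hk := key ((-c) * s) hεbnd
    nlinarith [hk, mul_lt_mul_of_pos_left hsq1 (mul_pos hspos hcsq)]
  -- rewrite the goal
  have hrew : (∑ r, (b r - A.mulVec xhat r) * (∑ i, lam i * A r i)) = -c := by
    rw [hc, ← Finset.sum_neg_distrib]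
    refine Finset.sum_congr rfl fun r _ => ?_
    have : (∑ i, lam i * A r i) = z r := by
      simp only [hz, Matrix.mulVec, dotProduct]
      exact Finset.sum_congr rfl fun i _ => mul_comm _ _
    rw [this, hw]
    ring
  rw [hrew, hc0, neg_zero]
end

section
/- Let x̂ minimize ‖Ax−b‖₂ over {x ∈ [0,1]^n : ‖x‖₁ ≤ σ} with at most m fractional entries, and let x⋆ be an optimal solution of min ‖Ax−b‖₂ over {x ∈ [0,1]^n : ‖x‖₀ ≤ σ}. Then ‖Ax⋆ − Ax̂‖₂ ≤ 2‖x̂ − ⌊x̂⌋‖₁ · max_i ‖A_i‖₂ ≤ 2 m^{3/2} ‖A‖_∞. -/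
open scoped BigOperators Classical RealInnerProductSpace

noncomputable def matInf {m n : ℕ} (A : Matrix (Fin m) (Fin n) ℤ) : ℝ :=
  ⨆ i, ⨆ j, |(A i j : ℝ)|

noncomputable def toE {m : ℕ} (v : Fin m → ℝ) : EuclideanSpace ℝ (Fin m) :=
  (WithLp.equiv 2 (Fin m → ℝ)).symm v

lemma l2_eq_norm {m : ℕ} (v : Fin m → ℝ) : l2 v = ‖toE v‖ := by
  simp [l2, toE, EuclideanSpace.norm_eq, sq_abs]

lemma sum_le_l0 {n : ℕ} (x : Fin n → ℝ) (hx : ∀ i, x i ≤ 1) :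
    ∑ i, x i ≤ (l0 x : ℝ) := by
  rw [l0, ← Finset.sum_filter_ne_zero Finset.univ]
  calc ∑ i ∈ Finset.univ.filter (fun i => x i ≠ 0), x i
      ≤ ∑ i ∈ Finset.univ.filter (fun i => x i ≠ 0), 1 :=
        Finset.sum_le_sum (fun i _ => hx i)
    _ = _ := by simp

lemma dir_lemma {m n : ℕ} (AR : Matrix (Fin m) (Fin n) ℝ) (b : Fin m → ℤ) (σ : ℕ)
    (xhat : Fin n → ℝ)
    (hhatopt : ∀ x : Fin n → ℝ, (∀ i, 0 ≤ x i ∧ x i ≤ 1) → l1 x ≤ σ →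
      l2 (AR.mulVec xhat - fun r => (b r : ℝ)) ≤ l2 (AR.mulVec x - fun r => (b r : ℝ)))
    (v : Fin n → ℝ) (t₀ : ℝ) (ht₀ : 0 < t₀)
    (hfeas : ∀ t, 0 < t → t ≤ t₀ →
      (∀ i, 0 ≤ xhat i + t * v i ∧ xhat i + t * v i ≤ 1) ∧
      l1 (fun i => xhat i + t * v i) ≤ σ) :
    0 ≤ ⟪toE (AR.mulVec xhat - fun r => (b r : ℝ)), toE (AR.mulVec v)⟫ := by
  set R := toE (AR.mulVec xhat - fun r => (b r : ℝ)) with hR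
  set W := toE (AR.mulVec v) with hW
  by_contra hlt
  push_neg at hlt
  set c := ⟪R, W⟫ with hc
  set q := ‖W‖ ^ 2 with hq
  have hqnn : 0 ≤ q := sq_nonneg _
  set t := min t₀ (-c / (q + 1)) with ht
  have htpos : 0 < t := lt_min ht₀ (div_pos (neg_pos.mpr hlt) (by linarith))
  obtain ⟨hbd, hl1⟩ := hfeas t htpos (min_le_left _ _)
  have hopt := hhatopt (fun i => xhat i + t * v i) hbd hl1
  have hfun : (fun i => xhat i + t * v i) = xhat + t • v := by
    funext i; simp [Pi.add_apply, Pi.smul_apply, smul_eq_mul]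
  have hmul : AR.mulVec (xhat + t • v) - (fun r => (b r : ℝ))
      = (AR.mulVec xhat - fun r => (b r : ℝ)) + t • AR.mulVec v := by
    funext k
    simp [Matrix.mulVec_add, Matrix.mulVec_smul, Pi.add_apply, Pi.sub_apply, Pi.smul_apply]
    ring
  rw [hfun, hmul] at hopt
  have hnorm : ‖R‖ ≤ ‖R + t • W‖ := by
    rw [l2_eq_norm, l2_eq_norm] at hopt
    have : toE ((AR.mulVec xhat - fun r => (b r : ℝ)) + t • AR.mulVec v) = R + t • W := rfl
    rwa [this] at hopt
  have hsq : ‖R‖ ^ 2 ≤ ‖R + t • W‖ ^ 2 := pow_le_pow_left₀ (norm_nonneg _) hnorm 2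
  have hexp : ‖R + t • W‖ ^ 2 = ‖R‖ ^ 2 + 2 * (t * c) + t ^ 2 * q := by
    rw [norm_add_sq_real, real_inner_smul_right, norm_smul]
    rw [← hc, hq]
    rw [mul_pow]
    simp [abs_of_pos htpos, sq_abs]
  have hkey : 0 ≤ 2 * (t * c) + t ^ 2 * q := by rw [hexp] at hsq; linarith
  have ht2 : t * (q + 1) ≤ -c := by
    have : t ≤ -c / (q + 1) := min_le_right _ _
    rwa [le_div_iff₀ (by linarith)] at this
  nlinarith [mul_pos htpos (neg_pos.mpr hlt), mul_le_mul_of_nonneg_left ht2 htpos.le]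

set_option maxHeartbeats 1600000 in
/-- proximity theorem: for an optimal solution `x̂` of the
ℓ₁-relaxation (with at most `m` fractional entries) and an optimal solution
`x⋆` of the ℓ₀-problem,
`‖Ax⋆ − Ax̂‖₂ ≤ 2‖x̂ − ⌊x̂⌋‖₁ · maxᵢ‖Aᵢ‖₂ ≤ 2 m^{3/2} ‖A‖_∞`. -/
theorem proximity_theorem (m n : ℕ) (A : Matrix (Fin m) (Fin n) ℤ)
    (b : Fin m → ℤ) (σ : ℕ) (hσ : 1 ≤ σ)
    (AR : Matrix (Fin m) (Fin n) ℝ) (hAR : AR = fun i j => (A i j : ℝ))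
    (xhat : Fin n → ℝ)
    (hhatfeas : (∀ i, 0 ≤ xhat i ∧ xhat i ≤ 1) ∧ l1 xhat ≤ σ)
    (hhatfrac : (Finset.univ.filter (fun i => ¬ ∃ z : ℤ, xhat i = z)).card ≤ m)
    (hhatopt : ∀ x : Fin n → ℝ, (∀ i, 0 ≤ x i ∧ x i ≤ 1) → l1 x ≤ σ →
      l2 (AR.mulVec xhat - fun r => (b r : ℝ)) ≤ l2 (AR.mulVec x - fun r => (b r : ℝ)))
    (xstar : Fin n → ℝ)
    (hstarfeas : (∀ i, 0 ≤ xstar i ∧ xstar i ≤ 1) ∧ l0 xstar ≤ σ)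
    (hstaropt : ∀ x : Fin n → ℝ, (∀ i, 0 ≤ x i ∧ x i ≤ 1) → l0 x ≤ σ →
      l2 (AR.mulVec xstar - fun r => (b r : ℝ)) ≤ l2 (AR.mulVec x - fun r => (b r : ℝ))) :
    l2 (AR.mulVec xstar - AR.mulVec xhat)
      ≤ 2 * l1 (fun i => xhat i - ⌊xhat i⌋) * (⨆ j, l2 (fun r => AR r j)) ∧
    2 * l1 (fun i => xhat i - ⌊xhat i⌋) * (⨆ j, l2 (fun r => AR r j))
      ≤ 2 * (m : ℝ) ^ ((3 : ℝ) / 2) * matInf A := by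
  obtain ⟨hhbd, hhl1⟩ := hhatfeas
  obtain ⟨hsbd, hsl0⟩ := hstarfeas
  set F : Finset (Fin n) := Finset.univ.filter (fun i => ¬ ∃ z : ℤ, xhat i = z) with hF
  set z : Fin n → ℝ := fun i => ((⌊xhat i⌋ : ℤ) : ℝ) with hz
  set frac : Fin n → ℝ := fun i => xhat i - z i with hfrac
  -- basic facts about frac and z
  have hfrac_nonneg : ∀ i, 0 ≤ frac i := fun i => by
    simp only [hfrac, hz, sub_nonneg]; exact Int.floor_le _
  have hfrac_lt_one : ∀ i, frac i < 1 := fun i => by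
    simp only [hfrac, hz, sub_lt_iff_lt_add]
    have := Int.lt_floor_add_one (xhat i); linarith
  have hxF : ∀ i ∈ F, 0 < xhat i ∧ xhat i < 1 := by
    intro i hi
    simp only [hF, Finset.mem_filter, Finset.mem_univ, true_and] at hi
    constructor
    · rcases lt_or_eq_of_le (hhbd i).1 with h | h
      · exact h
      · exact absurd ⟨(0:ℤ), by exact_mod_cast h.symm⟩ hi
    · rcases lt_or_eq_of_le (hhbd i).2 with h | h
      · exact h
      · exact absurd ⟨(1:ℤ), by exact_mod_cast h⟩ hi
  have hzF : ∀ i ∈ F, z i = 0 := by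
    intro i hi
    have hx := hxF i hi
    simp only [hz]
    norm_cast
    exact Int.floor_eq_zero_iff.mpr ⟨hx.1.le, hx.2⟩
  have hzNF : ∀ i ∉ F, z i = xhat i := by
    intro i hi
    simp only [hF, Finset.mem_filter, Finset.mem_univ, true_and, not_not] at hi
    obtain ⟨zz, hzz⟩ := hi
    simp only [hz, hzz, Int.floor_intCast]
  have hfracNF : ∀ i ∉ F, frac i = 0 := by
    intro i hi; simp only [hfrac, hzNF i hi, sub_self]
  have hz01 : ∀ i, z i = 0 ∨ z i = 1 := by
    intro i
    by_cases hi : i ∈ F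
    · exact Or.inl (hzF i hi)
    · rw [hzNF i hi]
      simp only [hF, Finset.mem_filter, Finset.mem_univ, true_and, not_not] at hi
      obtain ⟨zz, hzz⟩ := hi
      have h0 : (0:ℝ) ≤ zz := hzz ▸ (hhbd i).1
      have h1 : (zz:ℝ) ≤ 1 := hzz ▸ (hhbd i).2
      have h0' : (0:ℤ) ≤ zz := by exact_mod_cast h0
      have h1' : zz ≤ (1:ℤ) := by exact_mod_cast h1
      interval_cases zz
      · left; simp [hzz]
      · right; simp [hzz]
  have hz0 : ∀ i, 0 ≤ z i := fun i => by rcases hz01 i with h | h <;> rw [h] <;> norm_num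
  have hz1 : ∀ i, z i ≤ 1 := fun i => by rcases hz01 i with h | h <;> rw [h] <;> norm_num
  -- sums
  set Sf : ℝ := ∑ i, frac i with hSf
  set Sz : ℝ := ∑ i, z i with hSz
  set Sx : ℝ := ∑ i, xhat i with hSx
  have hl1hat : l1 xhat = Sx := by
    rw [l1]; exact Finset.sum_congr rfl (fun i _ => abs_of_nonneg (hhbd i).1)
  have hSxsplit : Sx = Sz + Sf := by
    rw [hSx, hSz, hSf, ← Finset.sum_add_distrib]
    exact Finset.sum_congr rfl (fun i _ => by simp [hfrac])
  have hSf_nonneg : 0 ≤ Sf := Finset.sum_nonneg (fun i _ => hfrac_nonneg i)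
  have hSzl0 : Sz = (l0 z : ℝ) := by
    rw [hSz, ← Finset.sum_filter_ne_zero Finset.univ, l0]
    rw [Finset.card_eq_sum_ones]
    push_cast
    refine Finset.sum_congr rfl (fun i hi => ?_)
    simp only [Finset.mem_filter] at hi
    rcases hz01 i with h | h
    · exact absurd h hi.2
    · rw [h]
  have hl0z : (l0 z : ℝ) ≤ σ := by
    rw [← hSzl0]
    have : Sz ≤ Sx := by rw [hSxsplit]; linarith
    linarith [hl1hat ▸ hhl1]
  have hl0z' : l0 z ≤ σ := by exact_mod_cast hl0z
  have hSfF : Sf = ∑ i ∈ F, frac i := by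
    rw [hSf]
    exact (Finset.sum_subset F.subset_univ (fun i _ hi => hfracNF i hi)).symm
  have hSf_le_cardF : Sf ≤ (F.card : ℝ) := by
    rw [hSfF]
    calc ∑ i ∈ F, frac i ≤ ∑ i ∈ F, 1 := Finset.sum_le_sum (fun i _ => (hfrac_lt_one i).le)
      _ = F.card := by simp
  -- choose J
  obtain ⟨J, t1, hJsub, hJ2, hJ4, ht1pos, hP3⟩ :
      ∃ (J : Finset (Fin n)) (t1 : ℝ), J ⊆ F ∧ l0 z + J.card ≤ σ ∧ (J.card : ℝ) ≤ Sf ∧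
        0 < t1 ∧ ∀ t, 0 ≤ t → t ≤ t1 → l1 xhat + t * |(J.card : ℝ) - Sf| ≤ σ := by
    by_cases hcase : l1 xhat = σ
    · -- tight case
      set s : ℕ := σ - l0 z with hs
      have hsR : (s : ℝ) = Sf := by
        have : (s : ℝ) = (σ : ℝ) - (l0 z : ℝ) := by
          rw [hs]; push_cast [Nat.cast_sub hl0z']; ring
        rw [this, ← hSzl0]
        have := hl1hat ▸ hcase
        linarith [hSxsplit]
      have hsle : s ≤ F.card := by
        have : (s:ℝ) ≤ (F.card : ℝ) := hsR ▸ hSf_le_cardF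
        exact_mod_cast this
      obtain ⟨J, hJsub, hJcard⟩ := Finset.exists_subset_card_eq hsle
      refine ⟨J, 1, hJsub, ?_, ?_, one_pos, ?_⟩
      · rw [hJcard, hs]; omega
      · rw [hJcard, hsR]
      · intro t _ _
        rw [hJcard, hsR, sub_self, abs_zero, mul_zero, add_zero, hcase]
    · -- slack case
      have hlt : l1 xhat < σ := lt_of_le_of_ne hhl1 hcase
      refine ⟨∅, (σ - l1 xhat) / (Sf + 1), Finset.empty_subset F, by simpa using hl0z',
        by simpa using hSf_nonneg, div_pos (by linarith) (by linarith), ?_⟩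
      intro t ht0 ht1
      have h1 : |(0:ℝ) - Sf| = Sf := by rw [zero_sub, abs_neg, abs_of_nonneg hSf_nonneg]
      simp only [Finset.card_empty, Nat.cast_zero, h1]
      have : t * Sf ≤ (σ - l1 xhat) / (Sf + 1) * Sf :=
        mul_le_mul_of_nonneg_right ht1 hSf_nonneg
      have h2 : (σ - l1 xhat) / (Sf + 1) * Sf ≤ σ - l1 xhat := by
        rw [div_mul_eq_mul_div, div_le_iff₀ (by linarith)]
        nlinarith
      linarith
  -- the direction v and rounded point z'
  set v : Fin n → ℝ := fun i => z i + (if i ∈ J then (1:ℝ) else 0) - xhat i with hv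
  set z' : Fin n → ℝ := fun i => z i + (if i ∈ J then (1:ℝ) else 0) with hz'
  have hvNF : ∀ i ∉ F, v i = 0 := by
    intro i hi
    have hiJ : i ∉ J := fun h => hi (hJsub h)
    simp [hv, hzNF i hi, hiJ]
  have hvabsF : ∀ i ∈ F, |v i| ≤ 1 := by
    intro i hi
    have hx := hxF i hi
    simp only [hv, hzF i hi, zero_add]
    by_cases hiJ : i ∈ J
    · rw [if_pos hiJ, abs_of_nonneg (by linarith)]; linarith
    · rw [if_neg hiJ, zero_sub, abs_neg, abs_of_nonneg hx.1.le]; linarith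
  have hvfracbound : ∀ i, |v i| ≤ frac i + (if i ∈ J then 1 else 0) := by
    intro i
    by_cases hi : i ∈ F
    · have hz0i := hzF i hi
      have hfi : frac i = xhat i := by simp [hfrac, hz0i]
      have hvi : v i = (if i ∈ J then (1:ℝ) else 0) - xhat i := by simp [hv, hz0i]
      rw [hvi, hfi]
      calc |(if i ∈ J then (1:ℝ) else 0) - xhat i|
          ≤ |(if i ∈ J then (1:ℝ) else 0)| + |xhat i| := abs_sub _ _
        _ = (if i ∈ J then (1:ℝ) else 0) + xhat i := by
            rw [abs_of_nonneg (by positivity), abs_of_nonneg (hhbd i).1]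
        _ = xhat i + (if i ∈ J then (1:ℝ) else 0) := by ring
    · rw [hvNF i hi, abs_zero]
      have := hfrac_nonneg i
      positivity
  have hsumite : ∑ i, (if i ∈ J then (1:ℝ) else 0) = (J.card : ℝ) := by
    rw [Finset.sum_ite_mem, Finset.univ_inter, Finset.sum_const]
    simp
  have hsumv : ∑ i, v i = (J.card : ℝ) - Sf := by
    simp only [hv]
    rw [Finset.sum_sub_distrib, Finset.sum_add_distrib, hsumite]
    have : Sx = Sz + Sf := hSxsplit
    simp only [← hSz, ← hSx]
    linarith
  -- step size
  set tF : ℝ := if h : F.Nonempty then F.inf' h (fun i => min (xhat i) (1 - xhat i)) else 1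
    with htF
  have htFpos : 0 < tF := by
    rw [htF]
    split
    · next h =>
      rw [Finset.lt_inf'_iff]
      intro i hi
      have hx := hxF i hi
      simp only [lt_min_iff]
      exact ⟨hx.1, by linarith [hx.2]⟩
    · norm_num
  have htFle : ∀ i ∈ F, tF ≤ min (xhat i) (1 - xhat i) := by
    intro i hi
    rw [htF, dif_pos ⟨i, hi⟩]
    exact Finset.inf'_le _ hi
  set t₀ : ℝ := min t1 (min 1 tF) with ht₀
  have ht₀pos : 0 < t₀ := lt_min ht1pos (lt_min one_pos htFpos)
  -- feasibility of xhat ± t v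
  have hfeaspm : ∀ ε : ℝ, (ε = 1 ∨ ε = -1) → ∀ t, 0 < t → t ≤ t₀ →
      (∀ i, 0 ≤ xhat i + t * (ε * v i) ∧ xhat i + t * (ε * v i) ≤ 1) ∧
      l1 (fun i => xhat i + t * (ε * v i)) ≤ σ := by
    intro ε hε t htpos htle
    have habs_ε : |ε| = 1 := by rcases hε with h | h <;> rw [h] <;> norm_num
    have hcoord : ∀ i, 0 ≤ xhat i + t * (ε * v i) ∧ xhat i + t * (ε * v i) ≤ 1 := by
      intro i
      by_cases hi : i ∈ F
      · have hb : |t * (ε * v i)| ≤ min (xhat i) (1 - xhat i) := by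
          rw [abs_mul, abs_mul, habs_ε, one_mul, abs_of_pos htpos]
          calc t * |v i| ≤ t * 1 := mul_le_mul_of_nonneg_left (hvabsF i hi) htpos.le
            _ = t := mul_one t
            _ ≤ tF := le_trans htle (le_trans (min_le_right _ _) (min_le_right _ _))
            _ ≤ _ := htFle i hi
        obtain ⟨hlo, hhi⟩ := abs_le.mp hb
        have h1 := min_le_left (xhat i) (1 - xhat i)
        have h2 := min_le_right (xhat i) (1 - xhat i)
        constructor <;> linarith
      · rw [hvNF i hi]
        simpa using hhbd i
    refine ⟨hcoord, ?_⟩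
    have hl1eq : l1 (fun i => xhat i + t * (ε * v i)) = ∑ i, (xhat i + t * (ε * v i)) := by
      rw [l1]
      exact Finset.sum_congr rfl (fun i _ => abs_of_nonneg (hcoord i).1)
    rw [hl1eq]
    have hsum : ∑ i, (xhat i + t * (ε * v i)) = Sx + t * ε * ((J.card : ℝ) - Sf) := by
      rw [Finset.sum_add_distrib, ← hSx]
      congr 1
      rw [← Finset.mul_sum]
      have : ∑ i, ε * v i = ε * ∑ i, v i := by rw [Finset.mul_sum]
      rw [this, hsumv]
      ring
    rw [hsum]
    have hεb : ε * ((J.card : ℝ) - Sf) ≤ |(J.card : ℝ) - Sf| := by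
      rcases hε with h | h <;> rw [h]
      · rw [one_mul]; exact le_abs_self _
      · rw [neg_one_mul]; exact neg_le_abs _
    have ht1' : t ≤ t1 := le_trans htle (min_le_left _ _)
    have := hP3 t htpos.le ht1'
    have hmul : t * (ε * ((J.card : ℝ) - Sf)) ≤ t * |(J.card : ℝ) - Sf| :=
      mul_le_mul_of_nonneg_left hεb htpos.le
    calc Sx + t * ε * ((J.card : ℝ) - Sf) = l1 xhat + t * (ε * ((J.card : ℝ) - Sf)) := by
          rw [hl1hat]; ring
      _ ≤ l1 xhat + t * |(J.card : ℝ) - Sf| := by linarith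
      _ ≤ σ := this
  -- inner product facts
  set R := toE (AR.mulVec xhat - fun r => (b r : ℝ)) with hRdef
  set D := toE (AR.mulVec xstar - AR.mulVec xhat) with hDdef
  set W := toE (AR.mulVec v) with hWdef
  -- h1 : ⟪R, D⟫ ≥ 0
  have h1 : 0 ≤ ⟪R, D⟫ := by
    have hSxstar : ∑ i, xstar i ≤ (σ : ℝ) := by
      have := sum_le_l0 xstar (fun i => (hsbd i).2)
      have h2 : (l0 xstar : ℝ) ≤ σ := by exact_mod_cast hsl0
      linarith
    have hfeas1 : ∀ t, 0 < t → t ≤ (1:ℝ) →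
        (∀ i, 0 ≤ xhat i + t * (xstar i - xhat i) ∧ xhat i + t * (xstar i - xhat i) ≤ 1) ∧
        l1 (fun i => xhat i + t * (xstar i - xhat i)) ≤ σ := by
      intro t h0 hle
      have hcoord : ∀ i, 0 ≤ xhat i + t * (xstar i - xhat i) ∧
          xhat i + t * (xstar i - xhat i) ≤ 1 := by
        intro i
        obtain ⟨a1, a2⟩ := hhbd i
        obtain ⟨b1, b2⟩ := hsbd i
        constructor <;> nlinarith
      refine ⟨hcoord, ?_⟩
      have : l1 (fun i => xhat i + t * (xstar i - xhat i))
          = ∑ i, (xhat i + t * (xstar i - xhat i)) :=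
        Finset.sum_congr rfl (fun i _ => abs_of_nonneg (hcoord i).1)
      rw [this]
      have hexp : ∑ i, (xhat i + t * (xstar i - xhat i))
          = Sx + t * ((∑ i, xstar i) - Sx) := by
        rw [Finset.sum_add_distrib, ← hSx, ← Finset.mul_sum, Finset.sum_sub_distrib, ← hSx]
      rw [hexp]
      have hSxσ : Sx ≤ (σ:ℝ) := hl1hat ▸ hhl1
      nlinarith
    have := dir_lemma AR b σ xhat hhatopt (fun i => xstar i - xhat i) 1 one_pos hfeas1
    have hmv : AR.mulVec (fun i => xstar i - xhat i) = AR.mulVec xstar - AR.mulVec xhat := by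
      have : (fun i => xstar i - xhat i) = xstar - xhat := rfl
      rw [this, Matrix.mulVec_sub]
    rwa [hmv] at this
  -- h2 : ⟪R, W⟫ = 0
  have h2 : ⟪R, W⟫ = 0 := by
    have h2a : 0 ≤ ⟪R, W⟫ := by
      have hfe : ∀ t, 0 < t → t ≤ t₀ →
          (∀ i, 0 ≤ xhat i + t * v i ∧ xhat i + t * v i ≤ 1) ∧
          l1 (fun i => xhat i + t * v i) ≤ σ := by
        intro t a1 a2
        have := hfeaspm 1 (Or.inl rfl) t a1 a2
        simpa using this
      exact dir_lemma AR b σ xhat hhatopt v t₀ ht₀pos hfe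
    have h2b : 0 ≤ -⟪R, W⟫ := by
      have hfe : ∀ t, 0 < t → t ≤ t₀ →
          (∀ i, 0 ≤ xhat i + t * (-v) i ∧ xhat i + t * (-v) i ≤ 1) ∧
          l1 (fun i => xhat i + t * (-v) i) ≤ σ := by
        intro t a1 a2
        have := hfeaspm (-1) (Or.inr rfl) t a1 a2
        simpa [neg_one_mul] using this
      have hkey := dir_lemma AR b σ xhat hhatopt (-v) t₀ ht₀pos hfe
      have hmv : AR.mulVec (-v) = -(AR.mulVec v) := by
        funext k
        simp [Matrix.mulVec, dotProduct, mul_neg, Finset.sum_neg_distrib]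
      rw [hmv] at hkey
      have heq : toE (-(AR.mulVec v)) = -W := rfl
      rw [heq, inner_neg_right] at hkey
      exact hkey
    linarith
  -- h3 : ‖R + D‖ ≤ ‖R + W‖  (x⋆ optimal for the ℓ₀ problem, z' feasible)
  have h3 : ‖R + D‖ ≤ ‖R + W‖ := by
    have hz'bd : ∀ i, 0 ≤ z' i ∧ z' i ≤ 1 := by
      intro i
      by_cases hiJ : i ∈ J
      · have : z i = 0 := hzF i (hJsub hiJ)
        simp [hz', hiJ, this]
      · simp only [hz', if_neg hiJ, add_zero]
        exact ⟨hz0 i, hz1 i⟩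
    have hz'l0 : l0 z' ≤ σ := by
      have hsub : Finset.univ.filter (fun i => z' i ≠ 0) ⊆
          (Finset.univ.filter (fun i => z i ≠ 0)) ∪ J := by
        intro i hi
        simp only [Finset.mem_filter, Finset.mem_univ, true_and] at hi
        rw [Finset.mem_union]
        by_cases hiJ : i ∈ J
        · exact Or.inr hiJ
        · left
          simp only [Finset.mem_filter, Finset.mem_univ, true_and]
          intro h0
          apply hi
          simp [hz', if_neg hiJ, h0]
      calc l0 z' ≤ ((Finset.univ.filter (fun i => z i ≠ 0)) ∪ J).card :=
            Finset.card_le_card hsub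
        _ ≤ l0 z + J.card := Finset.card_union_le _ _
        _ ≤ σ := hJ2
    have hopt := hstaropt z' hz'bd hz'l0
    have e1 : AR.mulVec xstar - (fun r => (b r : ℝ))
        = (AR.mulVec xhat - fun r => (b r : ℝ)) + (AR.mulVec xstar - AR.mulVec xhat) := by
      funext k; simp only [Pi.add_apply, Pi.sub_apply]; ring
    have hz'xv : z' = xhat + v := by
      funext i; simp only [hz', hv, Pi.add_apply]; ring
    have e2 : AR.mulVec z' - (fun r => (b r : ℝ))
        = (AR.mulVec xhat - fun r => (b r : ℝ)) + AR.mulVec v := by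
      rw [hz'xv, Matrix.mulVec_add]
      funext k; simp only [Pi.add_apply, Pi.sub_apply]; ring
    rw [e1, e2, l2_eq_norm, l2_eq_norm] at hopt
    exact hopt
  -- chain : ‖D‖ ≤ ‖W‖
  have hDW : ‖D‖ ≤ ‖W‖ := by
    have e1 : ‖R + D‖ ^ 2 = ‖R‖ ^ 2 + 2 * ⟪R, D⟫ + ‖D‖ ^ 2 := norm_add_sq_real R D
    have e2 : ‖R + W‖ ^ 2 = ‖R‖ ^ 2 + 2 * ⟪R, W⟫ + ‖W‖ ^ 2 := norm_add_sq_real R W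
    have hsq : ‖R + D‖ ^ 2 ≤ ‖R + W‖ ^ 2 := pow_le_pow_left₀ (norm_nonneg _) h3 2
    rw [e1, e2, h2] at hsq
    have hD2 : ‖D‖ ^ 2 ≤ ‖W‖ ^ 2 := by linarith
    exact le_of_pow_le_pow_left₀ two_ne_zero (norm_nonneg _) hD2
  -- column norms
  set C : ℝ := ⨆ j, l2 (fun r => AR r j) with hC
  have hl2nonneg : ∀ j, 0 ≤ l2 (fun r : Fin m => AR r j) := fun j => Real.sqrt_nonneg _
  have hC0 : 0 ≤ C := Real.iSup_nonneg hl2nonneg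
  have hcolC : ∀ j, l2 (fun r => AR r j) ≤ C := by
    intro j
    rw [hC]
    exact le_ciSup (f := fun j => l2 (fun r => AR r j))
      (Set.Finite.bddAbove (Set.finite_range _)) j
  have hWbound : ‖W‖ ≤ (∑ j, |v j|) * C := by
    have hmv : AR.mulVec v = ∑ j, v j • (fun k => AR k j) := by
      funext k
      simp [Matrix.mulVec, dotProduct, Finset.sum_apply, Pi.smul_apply,
        smul_eq_mul, mul_comm]
    have hW' : W = ∑ j, v j • toE (fun k => AR k j) := by
      rw [hWdef, hmv]; simp [toE, WithLp.toLp_sum]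
    calc ‖W‖ ≤ ∑ j, ‖v j • toE (fun k => AR k j)‖ := by
          rw [hW']; exact norm_sum_le _ _
      _ = ∑ j, |v j| * ‖toE (fun k => AR k j)‖ := by
          refine Finset.sum_congr rfl (fun j _ => ?_)
          rw [norm_smul, Real.norm_eq_abs]
      _ ≤ ∑ j, |v j| * C := by
          refine Finset.sum_le_sum (fun j _ => ?_)
          refine mul_le_mul_of_nonneg_left ?_ (abs_nonneg _)
          rw [← l2_eq_norm]; exact hcolC j
      _ = (∑ j, |v j|) * C := (Finset.sum_mul _ _ _).symm
  have hsumabsv : ∑ j, |v j| ≤ 2 * Sf := by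
    calc ∑ j, |v j| ≤ ∑ j, (frac j + if j ∈ J then (1:ℝ) else 0) :=
          Finset.sum_le_sum (fun j _ => hvfracbound j)
      _ = Sf + (J.card : ℝ) := by rw [Finset.sum_add_distrib, ← hSf, hsumite]
      _ ≤ 2 * Sf := by linarith
  have hl1frac : l1 (fun i => xhat i - ⌊xhat i⌋) = Sf := by
    rw [l1, hSf]
    exact Finset.sum_congr rfl (fun i _ => abs_of_nonneg (hfrac_nonneg i))
  constructor
  · -- first inequality
    calc l2 (AR.mulVec xstar - AR.mulVec xhat) = ‖D‖ := l2_eq_norm _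
      _ ≤ ‖W‖ := hDW
      _ ≤ (∑ j, |v j|) * C := hWbound
      _ ≤ 2 * Sf * C := mul_le_mul_of_nonneg_right hsumabsv hC0
      _ = 2 * l1 (fun i => xhat i - ⌊xhat i⌋) * C := by rw [hl1frac]
  · -- second inequality
    have hMnn : 0 ≤ matInf A :=
      Real.iSup_nonneg (fun i => Real.iSup_nonneg (fun j => abs_nonneg _))
    have hAij : ∀ i j, |(A i j : ℝ)| ≤ matInf A := by
      intro i j
      calc |(A i j : ℝ)| ≤ ⨆ j', |(A i j' : ℝ)| :=
            le_ciSup (f := fun j' => |(A i j' : ℝ)|)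
              (Set.Finite.bddAbove (Set.finite_range _)) j
        _ ≤ matInf A := by
            simp only [matInf]
            exact le_ciSup (f := fun i => ⨆ j', |(A i j' : ℝ)|)
              (Set.Finite.bddAbove (Set.finite_range _)) i
    have hColBound : ∀ j, l2 (fun r => AR r j) ≤ Real.sqrt m * matInf A := by
      intro j
      have hsum : ∑ i, (AR i j) ^ 2 ≤ (m : ℝ) * (matInf A) ^ 2 := by
        calc ∑ i, (AR i j) ^ 2 ≤ ∑ _i : Fin m, (matInf A) ^ 2 := by
              refine Finset.sum_le_sum (fun i _ => ?_)
              rw [hAR]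
              calc ((A i j : ℝ)) ^ 2 = |(A i j : ℝ)| ^ 2 := (sq_abs _).symm
                _ ≤ (matInf A) ^ 2 := pow_le_pow_left₀ (abs_nonneg _) (hAij i j) 2
          _ = (m : ℝ) * (matInf A) ^ 2 := by
              rw [Finset.sum_const, Finset.card_univ, Fintype.card_fin, nsmul_eq_mul]
      calc l2 (fun r => AR r j) = Real.sqrt (∑ i, (AR i j) ^ 2) := rfl
        _ ≤ Real.sqrt ((m : ℝ) * (matInf A) ^ 2) := Real.sqrt_le_sqrt hsum
        _ = Real.sqrt m * matInf A := by
            rw [Real.sqrt_mul (Nat.cast_nonneg m), Real.sqrt_sq hMnn]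
    have hCle : C ≤ Real.sqrt m * matInf A :=
      Real.iSup_le hColBound (by positivity)
    have hSfm : Sf ≤ (m : ℝ) := by
      have : (F.card : ℝ) ≤ (m : ℝ) := by exact_mod_cast hhatfrac
      linarith [hSf_le_cardF]
    have hrpow : (m : ℝ) ^ ((3 : ℝ) / 2) = (m : ℝ) * Real.sqrt m := by
      have h32 : ((3 : ℝ) / 2) = (3 : ℝ) * (1 / 2 : ℝ) := by norm_num
      rw [h32, Real.rpow_mul (Nat.cast_nonneg m)]
      rw [show ((m:ℝ) ^ (3:ℝ)) = (m:ℝ) ^ (3:ℕ) by rw [← Real.rpow_natCast (m:ℝ) 3]; norm_num]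
      rw [← Real.sqrt_eq_rpow]
      rw [show ((m:ℝ) ^ (3:ℕ)) = ((m:ℝ)^2) * m by ring]
      rw [Real.sqrt_mul (sq_nonneg _), Real.sqrt_sq (Nat.cast_nonneg m)]
    rw [hl1frac, hrpow]
    have hkey : Sf * C ≤ (m : ℝ) * (Real.sqrt m * matInf A) :=
      mul_le_mul hSfm hCle hC0 (Nat.cast_nonneg m)
    nlinarith [hkey]
end

section
/- Let x̄ be an ε-close solution of the ℓ₁-relaxation, i.e. ‖b−Ax̄‖₂² − ‖b−Ax̂‖₂² ≤ ε² where x̂ is an optimal solution. Then there exists an optimal solution x⋆ of the ℓ₀-problem with ‖Ax⋆ − Ax̄‖_∞ ≤ 2m^{3/2}‖A‖_∞ + ε. -/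
open scoped BigOperators Classical

noncomputable def linf {m : ℕ} (v : Fin m → ℝ) : ℝ := ⨆ i, |v i|

namespace EpsAux


noncomputable def ssq {m : ℕ} (v : Fin m → ℝ) : ℝ := ∑ i, v i ^ 2
noncomputable def dotp {m : ℕ} (u v : Fin m → ℝ) : ℝ := ∑ i, u i * v i

lemma ssq_nonneg {m : ℕ} (v : Fin m → ℝ) : 0 ≤ ssq v :=
  Finset.sum_nonneg fun i _ => sq_nonneg _

lemma ssq_expand {m : ℕ} (u v : Fin m → ℝ) (t : ℝ) :
    ssq (fun i => u i + t * v i) = ssq u + 2*t*dotp u v + t^2 * ssq v := by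
  unfold ssq dotp
  rw [Finset.mul_sum, Finset.mul_sum, ← Finset.sum_add_distrib, ← Finset.sum_add_distrib]
  exact Finset.sum_congr rfl fun i _ => by ring

lemma pos_coeff (c q t₀ : ℝ) (ht : 0 < t₀) (hq : 0 ≤ q)
    (H : ∀ t, 0 < t → t ≤ t₀ → 0 ≤ 2*t*c + t^2*q) : 0 ≤ c := by
  by_contra hc
  push_neg at hc
  rcases eq_or_lt_of_le hq with hq0 | hq0
  · have := H t₀ ht le_rfl; nlinarith
  · have htpos : 0 < min t₀ (-c/q) := lt_min ht (div_pos (neg_pos.mpr hc) hq0)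
    have h1 := H _ htpos (min_le_left _ _)
    have h2 : min t₀ (-c/q) ≤ -c/q := min_le_right _ _
    have h3 : min t₀ (-c/q) * q ≤ -c := by
      rw [← le_div_iff₀ hq0] at *; exact h2
    nlinarith

lemma exists_kernel {m n : ℕ} (AR : Matrix (Fin m) (Fin n) ℝ) (F : Finset (Fin n))
    (hF : m + 1 < F.card) :
    ∃ h : Fin n → ℝ, h ≠ 0 ∧ (∀ j, j ∉ F → h j = 0) ∧
      (∀ i, ∑ j, AR i j * h j = 0) ∧ (∑ j, h j = 0) := by
  classical
  let ψ : ({ x // x ∈ F } → ℝ) →ₗ[ℝ] (Fin m → ℝ) × ℝ :=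
    { toFun := fun y => (fun i => ∑ j : { x // x ∈ F }, AR i j.1 * y j, ∑ j : { x // x ∈ F }, y j)
      map_add' := fun a b => by
        ext i <;> simp [mul_add, Finset.sum_add_distrib]
      map_smul' := fun c a => by
        ext i <;> simp [Finset.mul_sum, mul_left_comm]
      }
  have hnotinj : ¬ Function.Injective ψ := by
    intro hinj
    have hle := LinearMap.finrank_le_finrank_of_injective hinj
    rw [Module.finrank_pi, Module.finrank_prod, Module.finrank_pi, Module.finrank_self,
      Fintype.card_coe, Fintype.card_fin] at hle
    omega
  rw [Function.not_injective_iff] at hnotinj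
  obtain ⟨a, b, hab, hne⟩ := hnotinj
  set y : { x // x ∈ F } → ℝ := a - b with hy
  have hy0 : ψ y = 0 := by rw [hy, map_sub, hab, sub_self]
  have hyne : y ≠ 0 := sub_ne_zero.mpr hne
  set h : Fin n → ℝ := fun j => if hj : j ∈ F then y ⟨j, hj⟩ else 0 with hh
  have hval : ∀ (j : Fin n) (hj : j ∈ F), h j = y ⟨j, hj⟩ := by
    intro j hj; simp [hh, hj]
  have hsupp : ∀ j, j ∉ F → h j = 0 := by intro j hj; simp [hh, hj]
  have hsum_eq : ∀ f : Fin n → ℝ, (∑ j, f j * h j) = ∑ j : {x // x ∈ F}, f j.1 * y j := by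
    intro f
    calc (∑ j, f j * h j) = ∑ j ∈ F, f j * h j :=
          (Finset.sum_subset F.subset_univ (fun j _ hj => by rw [hsupp j hj, mul_zero])).symm
      _ = ∑ j : {x // x ∈ F}, f j.1 * h j.1 := (Finset.sum_coe_sort F (fun j => f j * h j)).symm
      _ = ∑ j : {x // x ∈ F}, f j.1 * y j :=
          Finset.sum_congr rfl (fun j _ => by rw [hval j.1 j.2])
  refine ⟨h, ?_, hsupp, ?_, ?_⟩
  · obtain ⟨j, hj⟩ := Function.ne_iff.mp hyne
    intro h0
    apply hj
    have := congrFun h0 (j : Fin n)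
    rw [hval _ j.2] at this
    simpa using this
  · intro i
    have := congrFun (congrArg Prod.fst hy0) i
    rw [hsum_eq (fun j => AR i j)]
    simpa [ψ] using this
  · have := congrArg Prod.snd hy0
    have h2 := hsum_eq (fun _ => 1)
    simp only [one_mul] at h2
    rw [h2]
    simpa [ψ] using this




lemma l2_eq {m : ℕ} (v : Fin m → ℝ) : l2 v = Real.sqrt (ssq v) := rfl

lemma l2_sq {m : ℕ} (v : Fin m → ℝ) : l2 v ^ 2 = ssq v :=
  Real.sq_sqrt (Finset.sum_nonneg fun i _ => sq_nonneg _)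

lemma ssq_le_of_l2_le {m : ℕ} {u v : Fin m → ℝ} (h : l2 u ≤ l2 v) : ssq u ≤ ssq v := by
  rw [← l2_sq, ← l2_sq]
  exact pow_le_pow_left₀ (Real.sqrt_nonneg _) h 2

lemma l2_le_of_ssq_le {m : ℕ} {u v : Fin m → ℝ} (h : ssq u ≤ ssq v) : l2 u ≤ l2 v :=
  Real.sqrt_le_sqrt h

lemma mulVec_apply {m n : ℕ} (AR : Matrix (Fin m) (Fin n) ℝ) (x : Fin n → ℝ) (i : Fin m) :
    AR.mulVec x i = ∑ j, AR i j * x j := by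
  simp [Matrix.mulVec, dotProduct]

lemma mulVec_lincomb {m n : ℕ} (AR : Matrix (Fin m) (Fin n) ℝ) (x h : Fin n → ℝ) (t : ℝ)
    (i : Fin m) :
    AR.mulVec (fun j => x j + t * h j) i = AR.mulVec x i + t * AR.mulVec h i := by
  rw [mulVec_apply, mulVec_apply, mulVec_apply, Finset.mul_sum, ← Finset.sum_add_distrib]
  exact Finset.sum_congr rfl fun j _ => by ring

/-- existence of a minimizer of the ℓ₀ problem -/
lemma exists_l0_min {m n : ℕ} (AR : Matrix (Fin m) (Fin n) ℝ) (bR : Fin m → ℝ) (σ : ℕ) :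
    ∃ xs : Fin n → ℝ, ((∀ i, 0 ≤ xs i ∧ xs i ≤ 1) ∧ l0 xs ≤ σ) ∧
      ∀ x : Fin n → ℝ, (∀ i, 0 ≤ x i ∧ x i ≤ 1) → l0 x ≤ σ →
        l2 (AR.mulVec xs - bR) ≤ l2 (AR.mulVec x - bR) := by
  classical
  set K : Set (Fin n → ℝ) := {x | (∀ i, 0 ≤ x i ∧ x i ≤ 1) ∧ l0 x ≤ σ} with hK
  have hsub : K ⊆ Set.Icc 0 1 := by
    intro x hx
    exact ⟨fun i => (hx.1 i).1, fun i => (hx.1 i).2⟩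
  have hKeq : K = (Set.Icc (0 : Fin n → ℝ) 1) ∩
      (⋃ S ∈ {S : Finset (Fin n) | S.card ≤ σ}, {x : Fin n → ℝ | ∀ i ∉ S, x i = 0}) := by
    ext x
    simp only [Set.mem_inter_iff, Set.mem_iUnion, Set.mem_setOf_eq, hK, Set.mem_Icc]
    constructor
    · rintro ⟨hbox, hl0⟩
      refine ⟨⟨fun i => (hbox i).1, fun i => (hbox i).2⟩,
        Finset.univ.filter (fun i => x i ≠ 0), hl0, ?_⟩
      intro i hi
      simpa using hi
    · rintro ⟨hbox, S, hS, hxS⟩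
      refine ⟨fun i => ⟨hbox.1 i, hbox.2 i⟩, ?_⟩
      refine le_trans (Finset.card_le_card ?_) hS
      intro i hi
      simp only [Finset.mem_filter, Finset.mem_univ, true_and] at hi
      by_contra hiS
      exact hi (hxS i hiS)
  have hclosed : IsClosed K := by
    rw [hKeq]
    refine IsClosed.inter isClosed_Icc ?_
    refine Set.Finite.isClosed_biUnion (Set.toFinite _) (fun S _ => ?_)
    have : {x : Fin n → ℝ | ∀ i ∉ S, x i = 0} =
        ⋂ (i : Fin n) (_ : i ∉ S), {x : Fin n → ℝ | x i = 0} := by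
      ext x; simp
    rw [this]
    exact isClosed_iInter fun i => isClosed_iInter fun _ =>
      isClosed_eq (continuous_apply i) continuous_const
  have hcompact : IsCompact K := IsCompact.of_isClosed_subset isCompact_Icc hclosed hsub
  have hne : K.Nonempty := by
    refine ⟨0, fun i => by norm_num, ?_⟩
    simp [l0]
  have hcont : Continuous fun x : Fin n → ℝ => l2 (AR.mulVec x - bR) := by
    have h1 : ∀ i, Continuous fun x : Fin n → ℝ => (AR.mulVec x - bR) i := by
      intro i
      have : (fun x : Fin n → ℝ => (AR.mulVec x - bR) i) =
          fun x => (∑ j, AR i j * x j) - bR i := by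
        funext x; rw [Pi.sub_apply, mulVec_apply]
      rw [this]
      exact (continuous_finset_sum _ fun j _ =>
        (continuous_const.mul (continuous_apply j))).sub continuous_const
    exact Real.continuous_sqrt.comp (continuous_finset_sum _ fun i _ => (h1 i).pow 2)
  obtain ⟨xs, hxsK, hmin⟩ := hcompact.exists_isMinOn hne hcont.continuousOn
  exact ⟨xs, hxsK, fun x h1 h2 => hmin ⟨h1, h2⟩⟩

/-- fractional coordinates -/
noncomputable def fracs {n : ℕ} (x : Fin n → ℝ) : Finset (Fin n) :=
  Finset.univ.filter fun j => x j ≠ 0 ∧ x j ≠ 1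

lemma mem_fracs {n : ℕ} {x : Fin n → ℝ} {j : Fin n} :
    j ∈ fracs x ↔ x j ≠ 0 ∧ x j ≠ 1 := by simp [fracs]

/-- reduce to at most m+1 fractional coordinates keeping A x and the coordinate sum -/
lemma reduce {m n : ℕ} (AR : Matrix (Fin m) (Fin n) ℝ) (σr : ℝ) :
    ∀ N : ℕ, ∀ x : Fin n → ℝ, (fracs x).card ≤ N →
      (∀ i, 0 ≤ x i ∧ x i ≤ 1) → (∑ j, x j) ≤ σr →
      ∃ x' : Fin n → ℝ, (∀ i, 0 ≤ x' i ∧ x' i ≤ 1) ∧ (∑ j, x' j) ≤ σr ∧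
        AR.mulVec x' = AR.mulVec x ∧ (fracs x').card ≤ m + 1 := by
  intro N
  induction N with
  | zero => exact fun x hc hbox hsum => ⟨x, hbox, hsum, rfl, le_trans hc (Nat.zero_le _)⟩
  | succ N IH =>
    intro x hc hbox hsum
    by_cases hle : (fracs x).card ≤ m + 1
    · exact ⟨x, hbox, hsum, rfl, hle⟩
    push_neg at hle
    obtain ⟨h, hne, hsupp, hrows, hsum0⟩ := exists_kernel AR (fracs x) hle
    have hfrac_mem : ∀ j ∈ fracs x, 0 < x j ∧ x j < 1 := by
      intro j hj
      rw [mem_fracs] at hj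
      exact ⟨lt_of_le_of_ne (hbox j).1 (Ne.symm hj.1), lt_of_le_of_ne (hbox j).2 hj.2⟩
    set T : Finset (Fin n) := Finset.univ.filter (fun j => h j ≠ 0) with hT
    have hTsub : T ⊆ fracs x := by
      intro j hj
      simp only [hT, Finset.mem_filter, Finset.mem_univ, true_and] at hj
      by_contra hjF
      exact hj (hsupp j hjF)
    have hTne : T.Nonempty := by
      obtain ⟨j, hj⟩ := Function.ne_iff.mp hne
      exact ⟨j, Finset.mem_filter.mpr ⟨Finset.mem_univ j, hj⟩⟩
    set tf : Fin n → ℝ := fun j => if 0 < h j then (1 - x j) / h j else x j / (-(h j)) with htf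
    have htfpos : ∀ j ∈ T, 0 < tf j := by
      intro j hj
      have hj0 : h j ≠ 0 := by simpa [hT] using hj
      obtain ⟨h1, h2⟩ := hfrac_mem j (hTsub hj)
      rcases lt_or_gt_of_ne hj0 with hneg | hpos
      · rw [htf]; simp only [if_neg (not_lt.mpr hneg.le)]
        exact div_pos h1 (by linarith)
      · rw [htf]; simp only [if_pos hpos]
        exact div_pos (by linarith) hpos
    set ts : ℝ := T.inf' hTne tf with hts
    have htspos : 0 < ts := (Finset.lt_inf'_iff hTne).mpr htfpos
    obtain ⟨js, hjsT, hjseq⟩ := Finset.exists_mem_eq_inf' hTne tf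
    set x₁ : Fin n → ℝ := fun j => x j + ts * h j with hx₁
    have hfix : ∀ j, j ∉ T → x₁ j = x j := by
      intro j hj
      have : h j = 0 := by
        by_contra h0; exact hj (by simp [hT, h0])
      simp [hx₁, this]
    have hbnd : ∀ j ∈ T, 0 ≤ x₁ j ∧ x₁ j ≤ 1 := by
      intro j hj
      have hj0 : h j ≠ 0 := by simpa [hT] using hj
      obtain ⟨h1, h2⟩ := hfrac_mem j (hTsub hj)
      have hle' : ts ≤ tf j := Finset.inf'_le tf hj
      rcases lt_or_gt_of_ne hj0 with hneg | hpos
      · have htfj : tf j = x j / (-(h j)) := by rw [htf]; simp [not_lt.mpr hneg.le]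
        have : ts * (-(h j)) ≤ x j := by
          calc ts * (-(h j)) ≤ tf j * (-(h j)) :=
                mul_le_mul_of_nonneg_right hle' (by linarith)
            _ = x j := by rw [htfj]; field_simp
        constructor
        · simp only [hx₁]; nlinarith
        · have : ts * h j ≤ 0 := by nlinarith
          simp only [hx₁]; linarith
      · have htfj : tf j = (1 - x j) / h j := by rw [htf]; simp [hpos]
        have : ts * h j ≤ 1 - x j := by
          calc ts * h j ≤ tf j * h j := mul_le_mul_of_nonneg_right hle' hpos.le
            _ = 1 - x j := by rw [htfj]; field_simp
        constructor
        · have : 0 ≤ ts * h j := by positivity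
          simp only [hx₁]; linarith
        · simp only [hx₁]; linarith
    have hbox₁ : ∀ i, 0 ≤ x₁ i ∧ x₁ i ≤ 1 := by
      intro j
      by_cases hj : j ∈ T
      · exact hbnd j hj
      · rw [hfix j hj]; exact hbox j
    have hjs_boundary : x₁ js = 0 ∨ x₁ js = 1 := by
      have hj0 : h js ≠ 0 := by simpa [hT] using hjsT
      rcases lt_or_gt_of_ne hj0 with hneg | hpos
      · left
        have hts2 : ts = x js / (-(h js)) := by
          rw [hts, hjseq, htf]; simp [not_lt.mpr hneg.le]
        simp only [hx₁]
        have hne' : -h js ≠ 0 := neg_ne_zero.mpr hj0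
        rw [hts2]
        field_simp
        ring
      · right
        have hts2 : ts = (1 - x js) / h js := by
          rw [hts, hjseq, htf]; simp [hpos]
        simp only [hx₁]
        rw [hts2]; field_simp; ring
    have hnotfrac : ∀ j, j ∉ fracs x → x₁ j = x j := by
      intro j hj
      simp [hx₁, hsupp j hj]
    have hfsub : fracs x₁ ⊆ (fracs x).erase js := by
      intro j hj
      rw [mem_fracs] at hj
      refine Finset.mem_erase.mpr ⟨?_, ?_⟩
      · rintro rfl
        rcases hjs_boundary with h0 | h1
        · exact hj.1 h0
        · exact hj.2 h1
      · by_contra hjF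
        rw [hnotfrac j hjF] at hj
        rw [mem_fracs] at hjF
        exact hjF hj
    have hcard₁ : (fracs x₁).card ≤ N := by
      have h1 : (fracs x₁).card ≤ ((fracs x).erase js).card := Finset.card_le_card hfsub
      have h2 : ((fracs x).erase js).card = (fracs x).card - 1 :=
        Finset.card_erase_of_mem (hTsub hjsT)
      omega
    have hsum₁ : (∑ j, x₁ j) ≤ σr := by
      have : (∑ j, x₁ j) = (∑ j, x j) + ts * ∑ j, h j := by
        simp only [hx₁]
        rw [Finset.mul_sum, ← Finset.sum_add_distrib]
      rw [this, hsum0, mul_zero, add_zero]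
      exact hsum
    have hmul₁ : AR.mulVec x₁ = AR.mulVec x := by
      funext i
      rw [mulVec_apply, mulVec_apply]
      have : (∑ j, AR i j * x₁ j) = (∑ j, AR i j * x j) + ts * ∑ j, AR i j * h j := by
        simp only [hx₁]
        rw [Finset.mul_sum, ← Finset.sum_add_distrib]
        exact Finset.sum_congr rfl fun j _ => by ring
      rw [this, hrows i, mul_zero, add_zero]
    obtain ⟨x', hb', hs', hm', hc'⟩ := IH x₁ hcard₁ hbox₁ hsum₁
    exact ⟨x', hb', hs', by rw [hm', hmul₁], hc'⟩
lemma l1_eq_sum_of_box {n : ℕ} (x : Fin n → ℝ) (hbox : ∀ i, 0 ≤ x i ∧ x i ≤ 1) :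
    l1 x = ∑ j, x j :=
  Finset.sum_congr rfl fun j _ => abs_of_nonneg (hbox j).1

lemma l1_le_of_l0 {n : ℕ} (x : Fin n → ℝ) (hbox : ∀ i, 0 ≤ x i ∧ x i ≤ 1) {σ : ℕ}
    (h : l0 x ≤ σ) : l1 x ≤ σ := by
  have h1 : l1 x = ∑ j ∈ Finset.univ.filter (fun j => x j ≠ 0), |x j| :=
    (Finset.sum_subset (Finset.filter_subset _ _) (fun j _ hj => by
      simp only [Finset.mem_filter, Finset.mem_univ, true_and, not_not] at hj
      simp [hj])).symm
  rw [h1]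
  calc ∑ j ∈ Finset.univ.filter (fun j => x j ≠ 0), |x j|
      ≤ ∑ j ∈ Finset.univ.filter (fun j => x j ≠ 0), 1 := by
        refine Finset.sum_le_sum fun j _ => ?_
        rw [abs_of_nonneg (hbox j).1]; exact (hbox j).2
    _ = (l0 x : ℝ) := by rw [Finset.sum_const, nsmul_eq_mul, mul_one, l0]
    _ ≤ σ := by exact_mod_cast h

/-- first-order optimality at `xhat` and strong convexity in image space -/
lemma proj_ineq {m n : ℕ} (AR : Matrix (Fin m) (Fin n) ℝ) (bR : Fin m → ℝ) (σ : ℕ)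
    (xhat : Fin n → ℝ)
    (hhatfeas : (∀ i, 0 ≤ xhat i ∧ xhat i ≤ 1) ∧ l1 xhat ≤ σ)
    (hhatopt : ∀ x : Fin n → ℝ, (∀ i, 0 ≤ x i ∧ x i ≤ 1) → l1 x ≤ σ →
      l2 (AR.mulVec xhat - bR) ≤ l2 (AR.mulVec x - bR))
    (x : Fin n → ℝ) (hbox : ∀ i, 0 ≤ x i ∧ x i ≤ 1) (hl1 : l1 x ≤ σ) :
    ssq (fun i => AR.mulVec x i - AR.mulVec xhat i)
      ≤ ssq (AR.mulVec x - bR) - ssq (AR.mulVec xhat - bR) := by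
  classical
  set u : Fin m → ℝ := fun i => AR.mulVec xhat i - bR i with hu
  set v : Fin m → ℝ := fun i => AR.mulVec x i - AR.mulVec xhat i with hv
  have hU : (AR.mulVec xhat - bR) = u := by funext i; rw [Pi.sub_apply]
  have hAxt : ∀ t : ℝ, (AR.mulVec (fun j => xhat j + t * (x j - xhat j)) - bR)
      = fun i => u i + t * v i := by
    intro t
    funext i
    rw [Pi.sub_apply]
    have h2 : AR.mulVec (fun j => xhat j + t * (x j - xhat j)) i
        = AR.mulVec xhat i + t * AR.mulVec (fun j => x j - xhat j) i :=
      mulVec_lincomb AR xhat (fun j => x j - xhat j) t i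
    have h3 : AR.mulVec (fun j => x j - xhat j) i = AR.mulVec x i - AR.mulVec xhat i := by
      rw [mulVec_apply, mulVec_apply, mulVec_apply, ← Finset.sum_sub_distrib]
      exact Finset.sum_congr rfl fun j _ => by ring
    rw [h2, h3, hu, hv]
    ring
  have hD : 0 ≤ dotp u v := by
    refine pos_coeff _ (ssq v) 1 one_pos (ssq_nonneg v) ?_
    intro t ht0 ht1
    set xt : Fin n → ℝ := fun j => xhat j + t * (x j - xhat j) with hxt
    have hboxt : ∀ i, 0 ≤ xt i ∧ xt i ≤ 1 := by
      intro i
      obtain ⟨a1, a2⟩ := hhatfeas.1 i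
      obtain ⟨b1, b2⟩ := hbox i
      constructor
      · simp only [hxt]; nlinarith
      · simp only [hxt]; nlinarith
    have hl1t : l1 xt ≤ σ := by
      have hterm : ∀ j, |xt j| ≤ (1-t)*|xhat j| + t*|x j| := by
        intro j
        have he : xt j = (1-t)*xhat j + t*(x j) := by simp only [hxt]; ring
        rw [he]
        refine le_trans (abs_add_le _ _) ?_
        rw [abs_mul, abs_mul, abs_of_nonneg (by linarith : (0:ℝ) ≤ 1-t), abs_of_nonneg ht0.le]
      calc l1 xt ≤ ∑ j, ((1-t)*|xhat j| + t*|x j|) := Finset.sum_le_sum fun j _ => hterm j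
        _ = (1-t)*l1 xhat + t*l1 x := by
            rw [Finset.sum_add_distrib, l1, l1, Finset.mul_sum, Finset.mul_sum]
        _ ≤ (1-t)*σ + t*σ := by
            have := hhatfeas.2
            have h1t : (0:ℝ) ≤ 1 - t := by linarith
            nlinarith
        _ = σ := by ring
    have hopt := ssq_le_of_l2_le (hhatopt xt hboxt hl1t)
    rw [hU, hAxt t, ssq_expand] at hopt
    linarith
  have hfin : ssq (AR.mulVec x - bR) = ssq u + 2*dotp u v + ssq v := by
    have h1 : (AR.mulVec x - bR) = fun i => u i + (1:ℝ) * v i := by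
      funext i; rw [Pi.sub_apply, hu, hv]; ring
    rw [h1, ssq_expand]; ring
  have : ssq (fun i => AR.mulVec x i - AR.mulVec xhat i) = ssq v := rfl
  rw [this, hfin, hU]
  linarith

set_option maxHeartbeats 1600000 in
/-- rounding a near-vertex ℓ₁-optimal point to a sparse point with controlled objective -/
lemma exists_sparse_w {m n : ℕ} (AR : Matrix (Fin m) (Fin n) ℝ) (bR : Fin m → ℝ) (σ : ℕ)
    (M : ℝ) (hM0 : 0 ≤ M) (hM : ∀ i j, |AR i j| ≤ M)
    (xhat : Fin n → ℝ)
    (hhatfeas : (∀ i, 0 ≤ xhat i ∧ xhat i ≤ 1) ∧ l1 xhat ≤ σ)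
    (hhatopt : ∀ x : Fin n → ℝ, (∀ i, 0 ≤ x i ∧ x i ≤ 1) → l1 x ≤ σ →
      l2 (AR.mulVec xhat - bR) ≤ l2 (AR.mulVec x - bR)) :
    ∃ w : Fin n → ℝ, (∀ i, 0 ≤ w i ∧ w i ≤ 1) ∧ l0 w ≤ σ ∧
      ssq (AR.mulVec w - bR) ≤ ssq (AR.mulVec xhat - bR) + (m:ℝ) * (M * (m+1))^2 := by
  classical
  obtain ⟨hhbox, hhl1⟩ := hhatfeas
  have hsum : (∑ j, xhat j) ≤ (σ:ℝ) := by rw [← l1_eq_sum_of_box xhat hhbox]; exact hhl1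
  obtain ⟨x', hbox', hsum', hmul', hcard'⟩ :=
    reduce AR σ (fracs xhat).card xhat le_rfl hhbox hsum
  set F := fracs x' with hF
  set O := Finset.univ.filter (fun j => x' j = 1) with hO
  set k := O.card with hk
  have hfrac_mem : ∀ j ∈ F, 0 < x' j ∧ x' j < 1 := by
    intro j hj
    rw [hF, mem_fracs] at hj
    exact ⟨lt_of_le_of_ne (hbox' j).1 (Ne.symm hj.1), lt_of_le_of_ne (hbox' j).2 hj.2⟩
  have hOsum : ∑ j ∈ O, x' j = (k:ℝ) := by
    rw [Finset.sum_congr rfl (fun j hj => by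
      simp only [hO, Finset.mem_filter] at hj; exact hj.2)]
    simp [hk]
  have hFsub : F ⊆ Finset.univ.filter (fun j => ¬ x' j = 1) := by
    intro j hj
    rw [hF, mem_fracs] at hj
    simp [hj.2]
  have hsplit : (∑ j, x' j) = (k:ℝ) + ∑ j ∈ F, x' j := by
    rw [← Finset.sum_filter_add_sum_filter_not Finset.univ (fun j => x' j = 1) x', ← hO, hOsum]
    congr 1
    refine (Finset.sum_subset hFsub (fun j hj hjF => ?_)).symm
    simp only [Finset.mem_filter, Finset.mem_univ, true_and] at hj
    rw [hF, mem_fracs] at hjF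
    push_neg at hjF
    by_contra h0
    exact hj (hjF (fun he => h0 (by rw [he])))
  set sreal := ∑ j ∈ F, x' j with hsreal
  have hsreal0 : 0 ≤ sreal := Finset.sum_nonneg fun j _ => (hbox' j).1
  have hsrealF : sreal ≤ (F.card : ℝ) := by
    calc sreal ≤ ∑ _j ∈ F, (1:ℝ) := Finset.sum_le_sum fun j _ => (hbox' j).2
      _ = F.card := by simp
  set s := ⌈sreal⌉₊ with hs
  have hsF : s ≤ F.card := Nat.ceil_le.mpr (by exact_mod_cast hsrealF)
  have hkσR : (k:ℝ) + sreal ≤ σ := by rw [← hsplit]; exact hsum'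
  have hkσ : k ≤ σ := by
    have : (k:ℝ) ≤ σ := by linarith
    exact_mod_cast this
  have hks : k + s ≤ σ := by
    have h1 : sreal ≤ ((σ - k : ℕ) : ℝ) := by rw [Nat.cast_sub hkσ]; push_cast; linarith
    have := Nat.ceil_le.mpr h1
    omega
  obtain ⟨T, hTF, hTcard⟩ := Finset.exists_subset_card_eq hsF
  have hOT : Disjoint O T := by
    rw [Finset.disjoint_left]
    intro j hjO hjT
    have hjF := hTF hjT
    rw [hF, mem_fracs] at hjF
    simp only [hO, Finset.mem_filter] at hjO
    exact hjF.2 hjO.2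
  set w : Fin n → ℝ := fun j => if j ∈ O ∪ T then 1 else 0 with hw
  have hwbox : ∀ i, 0 ≤ w i ∧ w i ≤ 1 := by
    intro i
    simp only [hw]
    by_cases h : i ∈ O ∪ T
    · rw [if_pos h]; norm_num
    · rw [if_neg h]; norm_num
  have hwl0 : l0 w ≤ σ := by
    have he : Finset.univ.filter (fun j => w j ≠ 0) = O ∪ T := by
      ext j
      simp only [Finset.mem_filter, Finset.mem_univ, true_and, hw]
      by_cases hj : j ∈ O ∪ T
      · rw [if_pos hj]; simp [hj]
      · rw [if_neg hj]; simp [hj]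
    rw [l0, he, Finset.card_union_of_disjoint hOT, hTcard]
    exact hks
  set h : Fin n → ℝ := fun j => w j - x' j with hh
  have hsupp : ∀ j, j ∉ F → h j = 0 := by
    intro j hjF
    have hx : x' j = 0 ∨ x' j = 1 := by
      rw [hF, mem_fracs] at hjF
      push_neg at hjF
      by_cases h0 : x' j = 0
      · exact Or.inl h0
      · exact Or.inr (hjF h0)
    rcases hx with h0 | h1
    · have hjO : j ∉ O := by simp [hO, h0]
      have hjT : j ∉ T := fun ht => by
        have := hfrac_mem j (hTF ht); linarith [this.1, h0 ▸ le_refl (0:ℝ)]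
      simp [hh, hw, hjO, hjT, h0]
    · have hjO : j ∈ O := by simp [hO, h1]
      simp [hh, hw, Finset.mem_union, hjO, h1]
  have habs : ∀ j, |h j| ≤ 1 := by
    intro j
    obtain ⟨a1, a2⟩ := hwbox j
    obtain ⟨b1, b2⟩ := hbox' j
    rw [hh, abs_le]
    constructor <;> simp only [Pi.sub_apply] <;> linarith
  have hwsum : ∑ j, w j = ((k + s : ℕ) : ℝ) := by
    have h1 : ∑ j, w j = ∑ j ∈ Finset.univ ∩ (O ∪ T), (1:ℝ) := by
      rw [hw, ← Finset.sum_ite_mem]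
    rw [h1, Finset.univ_inter, Finset.sum_const, Finset.card_union_of_disjoint hOT, hTcard,
      nsmul_eq_mul, mul_one]
  have hsumh0 : 0 ≤ ∑ j, h j := by
    have h1 : ∑ j, h j = ((k+s:ℕ):ℝ) - ((k:ℝ) + sreal) := by
      simp only [hh]
      rw [Finset.sum_sub_distrib, hwsum, hsplit]
    rw [h1]
    have := Nat.le_ceil sreal
    push_cast
    push_cast at this
    linarith
  -- step size bound
  set t₀ : ℝ := if hFne : F.Nonempty then F.inf' hFne (fun j => min (x' j) (1 - x' j)) else 1
    with ht₀
  have ht₀pos : 0 < t₀ := by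
    rw [ht₀]
    split
    · next hFne =>
      rw [Finset.lt_inf'_iff]
      intro j hj
      obtain ⟨c1, c2⟩ := hfrac_mem j hj
      exact lt_min c1 (by linarith)
    · norm_num
  have ht₀le : ∀ j ∈ F, t₀ ≤ min (x' j) (1 - x' j) := by
    intro j hj
    rw [ht₀, dif_pos ⟨j, hj⟩]
    exact Finset.inf'_le _ hj
  have hfeas : ∀ t, 0 ≤ t → t ≤ t₀ → (∀ i, 0 ≤ x' i - t * h i ∧ x' i - t * h i ≤ 1) := by
    intro t ht0 ht1 j
    by_cases hjF : j ∈ F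
    · have hm1 := le_trans ht1 (le_trans (ht₀le j hjF) (min_le_left _ _))
      have hm2 := le_trans ht1 (le_trans (ht₀le j hjF) (min_le_right _ _))
      have hth : |t * h j| ≤ t := by
        rw [abs_mul, abs_of_nonneg ht0]
        nlinarith [habs j, abs_nonneg (h j)]
      rw [abs_le] at hth
      constructor <;> linarith
    · rw [hsupp j hjF]
      simpa using hbox' j
  have hl1feas : ∀ t, 0 ≤ t → t ≤ t₀ → l1 (fun j => x' j - t * h j) ≤ σ := by
    intro t ht0 ht1
    rw [l1_eq_sum_of_box _ (hfeas t ht0 ht1)]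
    have he : ∑ j, (x' j - t * h j) = (∑ j, x' j) - t * ∑ j, h j := by
      rw [Finset.mul_sum, ← Finset.sum_sub_distrib]
    rw [he]
    nlinarith
  -- derivative at x' in direction -h is ≤ 0
  set u : Fin m → ℝ := fun i => AR.mulVec x' i - bR i with hu
  set v : Fin m → ℝ := fun i => AR.mulVec h i with hv
  have hU : (AR.mulVec xhat - bR) = u := by
    funext i; rw [Pi.sub_apply, hu, hmul']
  have hmv : ∀ t : ℝ, (AR.mulVec (fun j => x' j - t * h j) - bR) = fun i => u i + (-t) * v i := by
    intro t
    funext i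
    rw [Pi.sub_apply]
    have h2 : AR.mulVec (fun j => x' j - t * h j) i
        = AR.mulVec x' i + (-t) * AR.mulVec h i := by
      have hfun : (fun j => x' j - t * h j) = (fun j => x' j + (-t) * h j) := by
        funext j; ring
      rw [hfun]
      exact mulVec_lincomb AR x' h (-t) i
    rw [h2, hu, hv]
    ring
  have hD : dotp u v ≤ 0 := by
    have hcoef := pos_coeff (-(dotp u v)) (ssq v) t₀ ht₀pos (ssq_nonneg v) ?_
    · linarith
    intro t ht0 ht1
    have hopt := ssq_le_of_l2_le (hhatopt _ (hfeas t ht0.le ht1) (hl1feas t ht0.le ht1))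
    rw [hU, hmv t, ssq_expand] at hopt
    nlinarith
  -- value at w
  have hwx : (AR.mulVec w - bR) = fun i => u i + (1:ℝ) * v i := by
    have hfun : w = fun j => x' j + (1:ℝ) * h j := by
      funext j; simp [hh]
    funext i
    rw [Pi.sub_apply, hfun]
    rw [mulVec_lincomb AR x' h 1 i, hu, hv]
    ring
  have hvb : ∀ i, |v i| ≤ M * ((m:ℝ)+1) := by
    intro i
    have hvi : |v i| = |∑ j, AR i j * h j| := by
      simp only [hv]
      rw [mulVec_apply]
    rw [hvi]
    calc |∑ j, AR i j * h j| ≤ ∑ j, |AR i j * h j| := Finset.abs_sum_le_sum_abs _ _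
      _ = ∑ j ∈ F, |AR i j * h j| :=
          (Finset.sum_subset F.subset_univ (fun j _ hj => by
            rw [hsupp j hj, mul_zero, abs_zero])).symm
      _ ≤ ∑ _j ∈ F, M := Finset.sum_le_sum (fun j _ => by
          rw [abs_mul]
          calc |AR i j| * |h j| ≤ M * 1 :=
                mul_le_mul (hM i j) (habs j) (abs_nonneg _) hM0
            _ = M := mul_one M)
      _ = (F.card : ℝ) * M := by rw [Finset.sum_const, nsmul_eq_mul]
      _ ≤ ((m:ℝ)+1) * M := by
          have hc : (F.card : ℝ) ≤ (m:ℝ)+1 := by exact_mod_cast hcard'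
          nlinarith
      _ = M * ((m:ℝ)+1) := mul_comm _ _
  have hssqv : ssq v ≤ (m:ℝ) * (M*((m:ℝ)+1))^2 := by
    calc ssq v = ∑ i, v i^2 := rfl
      _ ≤ ∑ _i : Fin m, (M*((m:ℝ)+1))^2 := Finset.sum_le_sum (fun i _ => by
          rw [← sq_abs]
          exact pow_le_pow_left₀ (abs_nonneg _) (hvb i) 2)
      _ = (m:ℝ) * (M*((m:ℝ)+1))^2 := by
          rw [Finset.sum_const, Finset.card_univ, Fintype.card_fin, nsmul_eq_mul]
  refine ⟨w, hwbox, hwl0, ?_⟩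
  have hXu : ssq (AR.mulVec xhat - bR) = ssq u := by rw [hU]
  have hfin : ssq (AR.mulVec w - bR) = ssq u + 2*dotp u v + ssq v := by
    rw [hwx, ssq_expand]; ring
  rw [hfin, hXu]
  linarith


end EpsAux

open EpsAux

set_option maxHeartbeats 1600000 in
/-- for an ε-close solution `x̄` of the ℓ₁-relaxation there is an
optimal solution `x⋆` of the ℓ₀-problem with
`‖Ax⋆ − Ax̄‖_∞ ≤ 2 m^{3/2} ‖A‖_∞ + ε`. -/
theorem eps_close_l0_proximity (m n : ℕ) (A : Matrix (Fin m) (Fin n) ℤ)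
    (b : Fin m → ℤ) (σ : ℕ) (hσ : 1 ≤ σ) (ε : ℝ) (hε : 0 ≤ ε)
    (AR : Matrix (Fin m) (Fin n) ℝ) (hAR : AR = fun i j => (A i j : ℝ))
    (bR : Fin m → ℝ) (hbR : bR = fun r => (b r : ℝ))
    (xhat : Fin n → ℝ)
    (hhatfeas : (∀ i, 0 ≤ xhat i ∧ xhat i ≤ 1) ∧ l1 xhat ≤ σ)
    (hhatopt : ∀ x : Fin n → ℝ, (∀ i, 0 ≤ x i ∧ x i ≤ 1) → l1 x ≤ σ →
      l2 (AR.mulVec xhat - bR) ≤ l2 (AR.mulVec x - bR))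
    (xbar : Fin n → ℝ)
    (hbarfeas : (∀ i, 0 ≤ xbar i ∧ xbar i ≤ 1) ∧ l1 xbar ≤ σ)
    (hclose : l2 (bR - AR.mulVec xbar) ^ 2 - l2 (bR - AR.mulVec xhat) ^ 2 ≤ ε ^ 2) :
    ∃ xstar : Fin n → ℝ,
      ((∀ i, 0 ≤ xstar i ∧ xstar i ≤ 1) ∧ l0 xstar ≤ σ) ∧
      (∀ x : Fin n → ℝ, (∀ i, 0 ≤ x i ∧ x i ≤ 1) → l0 x ≤ σ →
        l2 (AR.mulVec xstar - bR) ≤ l2 (AR.mulVec x - bR)) ∧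
      linf (AR.mulVec xstar - AR.mulVec xbar)
        ≤ 2 * (m : ℝ) ^ ((3 : ℝ) / 2) * matInf A + ε := by
  classical
  have hM0 : 0 ≤ matInf A :=
    Real.iSup_nonneg fun i => Real.iSup_nonneg fun j => abs_nonneg _
  have hMb : ∀ i j, |AR i j| ≤ matInf A := by
    intro i j
    rw [hAR]
    calc |(A i j : ℝ)| ≤ ⨆ j', |(A i j' : ℝ)| :=
          le_ciSup (f := fun j' => |(A i j' : ℝ)|) (Set.finite_range _).bddAbove j
      _ ≤ matInf A :=
          le_ciSup (f := fun i' => ⨆ j', |(A i' j' : ℝ)|) (Set.finite_range _).bddAbove i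
  obtain ⟨xstar, ⟨hsbox, hsl0⟩, hsopt⟩ := exists_l0_min AR bR σ
  refine ⟨xstar, ⟨hsbox, hsl0⟩, hsopt, ?_⟩
  obtain ⟨w, hwbox, hwl0, hwssq⟩ :=
    exists_sparse_w AR bR σ (matInf A) hM0 hMb xhat hhatfeas hhatopt
  have hstar1 : ssq (AR.mulVec xstar - bR) ≤ ssq (AR.mulVec w - bR) :=
    ssq_le_of_l2_le (hsopt w hwbox hwl0)
  have hproj1 := proj_ineq AR bR σ xhat hhatfeas hhatopt xstar hsbox
    (l1_le_of_l0 xstar hsbox hsl0)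
  have hproj2 := proj_ineq AR bR σ xhat hhatfeas hhatopt xbar hbarfeas.1 hbarfeas.2
  have hbar_ssq : ssq (AR.mulVec xbar - bR) - ssq (AR.mulVec xhat - bR) ≤ ε^2 := by
    have e1 : l2 (bR - AR.mulVec xbar) ^ 2 = ssq (AR.mulVec xbar - bR) := by
      rw [l2_sq]
      exact Finset.sum_congr rfl fun i _ => by rw [Pi.sub_apply, Pi.sub_apply]; ring
    have e2 : l2 (bR - AR.mulVec xhat) ^ 2 = ssq (AR.mulVec xhat - bR) := by
      rw [l2_sq]
      exact Finset.sum_congr rfl fun i _ => by rw [Pi.sub_apply, Pi.sub_apply]; ring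
    rw [← e1, ← e2]
    exact hclose
  set B : ℝ := 2 * (m : ℝ) ^ ((3 : ℝ) / 2) * matInf A with hB
  have hB0 : 0 ≤ B := by
    refine mul_nonneg (mul_nonneg (by norm_num) ?_) hM0
    exact Real.rpow_nonneg (Nat.cast_nonneg m) _
  have hBsq : ((m:ℝ) ^ ((3:ℝ)/2))^2 = ((m:ℝ))^(3:ℕ) := by
    rw [← Real.rpow_natCast ((m:ℝ) ^ ((3:ℝ)/2)) 2, ← Real.rpow_mul (Nat.cast_nonneg m)]
    rw [show ((3:ℝ)/2*(2:ℕ):ℝ) = ((3:ℕ):ℝ) by push_cast; ring, Real.rpow_natCast]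
  have hmb : (m:ℝ) * (matInf A * ((m:ℝ)+1))^2 ≤ B^2 := by
    have h4 : B^2 = 4*((m:ℝ))^(3:ℕ)*(matInf A)^2 := by
      rw [hB, mul_pow, mul_pow, hBsq]; ring
    rw [h4]
    have hcases : (m:ℝ) = 0 ∨ (1:ℝ) ≤ (m:ℝ) := by
      rcases Nat.eq_zero_or_pos m with h0 | h1
      · left; exact_mod_cast h0
      · right; exact_mod_cast h1
    rcases hcases with h0 | h1
    · rw [h0]; nlinarith [sq_nonneg (matInf A)]
    · nlinarith [sq_nonneg (matInf A), sq_nonneg ((m:ℝ) - 1), hM0]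
  have hstar_close : ssq (fun i => AR.mulVec xstar i - AR.mulVec xhat i) ≤ B^2 := by
    refine le_trans hproj1 ?_
    linarith
  have hbar_close : ssq (fun i => AR.mulVec xbar i - AR.mulVec xhat i) ≤ ε^2 :=
    le_trans hproj2 hbar_ssq
  have hpt : ∀ i, |(AR.mulVec xstar - AR.mulVec xbar) i| ≤ B + ε := by
    intro i
    have key : ∀ (z : Fin n → ℝ) (C : ℝ), 0 ≤ C →
        ssq (fun i => AR.mulVec z i - AR.mulVec xhat i) ≤ C^2 →
        |AR.mulVec z i - AR.mulVec xhat i| ≤ C := by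
      intro z C hC hs
      have h1 : (AR.mulVec z i - AR.mulVec xhat i)^2 ≤ C^2 :=
        le_trans (Finset.single_le_sum
          (f := fun i' => (AR.mulVec z i' - AR.mulVec xhat i')^2)
          (fun i' _ => sq_nonneg _) (Finset.mem_univ i)) hs
      calc |AR.mulVec z i - AR.mulVec xhat i|
          = Real.sqrt ((AR.mulVec z i - AR.mulVec xhat i)^2) := (Real.sqrt_sq_eq_abs _).symm
        _ ≤ Real.sqrt (C^2) := Real.sqrt_le_sqrt h1
        _ = C := Real.sqrt_sq hC
    have e1 := key xstar B hB0 hstar_close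
    have e2 := key xbar ε hε hbar_close
    rw [Pi.sub_apply]
    calc |AR.mulVec xstar i - AR.mulVec xbar i|
        ≤ |AR.mulVec xstar i - AR.mulVec xhat i| + |AR.mulVec xhat i - AR.mulVec xbar i| :=
          abs_sub_le _ _ _
      _ ≤ B + ε := by
          rw [abs_sub_comm (AR.mulVec xhat i)]
          exact add_le_add e1 e2
  show linf (AR.mulVec xstar - AR.mulVec xbar) ≤ B + ε
  rw [show linf (AR.mulVec xstar - AR.mulVec xbar)
      = ⨆ i, |(AR.mulVec xstar - AR.mulVec xbar) i| from rfl]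
  by_cases hm : Nonempty (Fin m)
  · exact ciSup_le fun i => hpt i
  · haveI := not_nonempty_iff.mp hm
    rw [Real.iSup_of_isEmpty]
    linarith
end

section
/- Let P = {x ∈ [0,1]^n : Σ x_i ≤ σ} with 1 ≤ σ ≤ n, and w = (σ/(n+σ))·𝟙. Then for t = σ/n, w + t(w − P) ⊆ P; in particular the asymmetry coefficient α(P : w) = sup{t : w + t(w−P) ⊆ P} is at least σ/n. -/
open scoped BigOperators

/-- for `P = {x ∈ [0,1]^n : Σ x_i ≤ σ}` with `1 ≤ σ ≤ n` and
`w = (σ/(n+σ))·𝟙`, taking `t = σ/n` we have `w + t(w − P) ⊆ P`; in particular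
the asymmetry coefficient `α(P : w) = sup{t : w + t(w−P) ⊆ P}` is at least
`σ/n`. -/
theorem asymmetry_coefficient_bound (n σ : ℕ) (hσ : 1 ≤ σ) (hσn : σ ≤ n)
    (P : Set (Fin n → ℝ))
    (hP : P = {x : Fin n → ℝ | (∀ i, 0 ≤ x i ∧ x i ≤ 1) ∧ (∑ i, x i) ≤ σ})
    (w : Fin n → ℝ) (hw : w = fun _ => (σ : ℝ) / (n + σ)) :
    (∀ p ∈ P, w + ((σ : ℝ) / n) • (w - p) ∈ P) ∧
    (σ : ℝ) / n ≤ sSup {t : ℝ | ∀ p ∈ P, w + t • (w - p) ∈ P} := by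
  have hn : (0:ℝ) < n := by exact_mod_cast Nat.lt_of_lt_of_le hσ hσn
  have hσ' : (0:ℝ) < σ := by exact_mod_cast hσ
  have hns : (0:ℝ) < (n:ℝ) + σ := by linarith
  have hσn' : (σ:ℝ) ≤ n := by exact_mod_cast hσn
  have key : ∀ p ∈ P, w + ((σ : ℝ) / n) • (w - p) ∈ P := by
    intro p hp
    rw [hP] at hp ⊢
    obtain ⟨hbox, hsum⟩ := hp
    have hcomp : ∀ i, (w + ((σ : ℝ) / n) • (w - p)) i = (σ:ℝ)/n * (1 - p i) := by
      intro i
      simp only [hw, Pi.add_apply, Pi.smul_apply, Pi.sub_apply, smul_eq_mul]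
      field_simp
      ring
    have hsn : (σ:ℝ)/n ≤ 1 := by
      rw [div_le_one hn]; exact hσn'
    constructor
    · intro i
      rw [hcomp i]
      constructor
      · exact mul_nonneg (div_nonneg hσ'.le hn.le) (by linarith [(hbox i).2])
      · apply mul_le_one₀ hsn (by linarith [(hbox i).2]) (by linarith [(hbox i).1])
    · have : ∑ i, (w + ((σ : ℝ) / n) • (w - p)) i = (σ:ℝ)/n * (n - ∑ i, p i) := by
        simp only [hcomp]
        rw [← Finset.mul_sum, Finset.sum_sub_distrib]
        simp [mul_sub]
      rw [this]
      have hp0 : 0 ≤ ∑ i, p i := Finset.sum_nonneg fun i _ => (hbox i).1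
      have : (σ:ℝ)/n * (n - ∑ i, p i) ≤ (σ:ℝ)/n * n := by
        apply mul_le_mul_of_nonneg_left (by linarith) (by positivity)
      calc (σ:ℝ)/n * (n - ∑ i, p i) ≤ (σ:ℝ)/n * n := this
        _ = σ := by field_simp
  refine ⟨key, ?_⟩
  apply le_csSup
  · refine ⟨(n:ℝ)/σ, ?_⟩
    intro t ht
    have h0 : (0 : Fin n → ℝ) ∈ P := by
      rw [hP]
      constructor
      · intro i; norm_num
      · simp
    have := ht 0 h0
    rw [hP] at this
    have hi : Fin n := ⟨0, by omega⟩
    have h1 := (this.1 hi).2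
    simp only [hw, Pi.add_apply, Pi.smul_apply, Pi.sub_apply, Pi.zero_apply,
      smul_eq_mul, sub_zero] at h1
    rw [le_div_iff₀ hσ']
    have h2 : (σ:ℝ) + t*σ ≤ (n:ℝ) + σ := by
      have h3 := mul_le_mul_of_nonneg_right h1 hns.le
      field_simp at h3
      linarith
    linarith
  · exact key
end
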